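/- arXiv:2404.01057 — 3 statements merged into one kernel-verified Lean document; each statement's English description precedes it below -/
import Mathlib

section
/- Let F be a field, d and k positive integers, and A ⊆ F^d a k-nearly orthogonal set. Then |A| is strictly less than the Ramsey number R(d+1, k+1); in particular |A| < C(d+k, k). -/
open Finset

lemma ES : ∀ n s t : ℕ, s + t ≤ n → ∀ {V : Type} [DecidableEq V] (G : SimpleGraph V)
    (A : Finset V), (s + t).choose s ≤ A.card →
    (∃ S ⊆ A, G.IsNClique (s + 1) S) ∨ (∃ S ⊆ A, Gᶜ.IsNClique (t + 1) S) := by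
  intro n
  induction n with
  | zero =>
    intro s t hst V _ G A hA
    have hs : s = 0 := by omega
    have ht : t = 0 := by omega
    subst hs; subst ht
    simp only [Nat.choose_self] at hA
    have hA1 : 0 < A.card := hA
    obtain ⟨v, hv⟩ := Finset.card_pos.mp hA1
    exact Or.inl ⟨{v}, by simpa, by simp [SimpleGraph.isNClique_iff, Set.pairwise_singleton]⟩
  | succ n ih =>
    intro s t hst V _ G A hA
    classical
    match s, t with
    | 0, t =>
      simp only [Nat.choose_zero_right] at hA
      have hA1 : 0 < A.card := hA
      obtain ⟨v, hv⟩ := Finset.card_pos.mp hA1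
      exact Or.inl ⟨{v}, by simpa, by simp [SimpleGraph.isNClique_iff, Set.pairwise_singleton]⟩
    | s + 1, 0 =>
      have h1 : 1 ≤ (s + 1 + 0).choose (s + 1) := Nat.choose_pos (by omega)
      have hA1 : 0 < A.card := by omega
      obtain ⟨v, hv⟩ := Finset.card_pos.mp hA1
      exact Or.inr ⟨{v}, by simpa, by simp [SimpleGraph.isNClique_iff, Set.pairwise_singleton]⟩
    | s + 1, t + 1 =>
      have hpos : 1 ≤ (s + 1 + (t + 1)).choose (s + 1) := Nat.choose_pos (by omega)
      have hA1 : 0 < A.card := by omega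
      obtain ⟨v, hv⟩ := Finset.card_pos.mp hA1
      set N := (A.erase v).filter (fun u => G.Adj v u) with hN
      set M := (A.erase v).filter (fun u => ¬ G.Adj v u) with hM
      have hNM : N.card + M.card = A.card - 1 := by
        rw [hN, hM, Finset.card_filter_add_card_filter_not,
          Finset.card_erase_of_mem hv]
      have hpascal : (s + 1 + (t + 1)).choose (s + 1)
          = (s + t + 1).choose s + (s + t + 1).choose (s + 1) := by
        have : s + 1 + (t + 1) = (s + t + 1) + 1 := by omega
        rw [this, Nat.choose_succ_succ]
      have hcases : (s + (t + 1)).choose s ≤ N.card ∨ (s + 1 + t).choose (s + 1) ≤ M.card := by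
        by_contra hc
        push_neg at hc
        have e1 : s + (t + 1) = s + t + 1 := by omega
        have e2 : s + 1 + t = s + t + 1 := by omega
        rw [e1] at hc; rw [e2] at hc
        omega
      rcases hcases with hcN | hcM
      · rcases ih s (t + 1) (by omega) G N hcN with ⟨S, hSN, hS⟩ | ⟨S, hSN, hS⟩
        · refine Or.inl ⟨insert v S, ?_, hS.insert ?_⟩
          · intro x hx
            rcases Finset.mem_insert.mp hx with rfl | hx
            · exact hv
            · exact Finset.mem_of_mem_erase (Finset.mem_of_mem_filter x (hSN hx))
          · intro b hb
            exact (Finset.mem_filter.mp (hSN hb)).2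
        · exact Or.inr ⟨S, fun x hx => Finset.mem_of_mem_erase
            (Finset.mem_of_mem_filter x (hSN hx)), hS⟩
      · rcases ih (s + 1) t (by omega) G M hcM with ⟨S, hSM, hS⟩ | ⟨S, hSM, hS⟩
        · exact Or.inl ⟨S, fun x hx => Finset.mem_of_mem_erase
            (Finset.mem_of_mem_filter x (hSM hx)), hS⟩
        · refine Or.inr ⟨insert v S, ?_, hS.insert ?_⟩
          · intro x hx
            rcases Finset.mem_insert.mp hx with rfl | hx
            · exact hv
            · exact Finset.mem_of_mem_erase (Finset.mem_of_mem_filter x (hSM hx))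
          · intro b hb
            have hb' := Finset.mem_filter.mp (hSM hb)
            have hne : v ≠ b := fun h => (Finset.ne_of_mem_erase hb'.1) h.symm
            exact (SimpleGraph.compl_adj G v b).mpr ⟨hne, hb'.2⟩

/-- The Ramsey number `R(s,t)`: the least `N` such that every graph on `N`
vertices contains a clique of size `s` or an independent set of size `t`. -/
noncomputable def ramseyNumber (s t : ℕ) : ℕ :=
  sInf {N : ℕ | ∀ G : SimpleGraph (Fin N),
    (∃ S : Finset (Fin N), G.IsNClique s S) ∨ (∃ S : Finset (Fin N), Gᶜ.IsNClique t S)}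

/-- A `k`-nearly orthogonal set `A ⊆ F^d` has size strictly less than the
Ramsey number `R(d+1, k+1)`; in particular `|A| < C(d+k, k)`. -/
theorem stmt_3 (F : Type) [Field F] (d k : ℕ) (hd : 1 ≤ d) (hk : 1 ≤ k)
    (A : Finset (Fin d → F))
    (hns : ∀ v ∈ A, ∑ i, v i * v i ≠ 0)
    (hno : ∀ S ⊆ A, S.card = k + 1 →
      ∃ u ∈ S, ∃ v ∈ S, u ≠ v ∧ ∑ i, u i * v i = 0) :
    A.card < ramseyNumber (d + 1) (k + 1) ∧ A.card < (d + k).choose k := by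
  classical
  set RSet := {N : ℕ | ∀ G : SimpleGraph (Fin N),
    (∃ S : Finset (Fin N), G.IsNClique (d + 1) S) ∨
      (∃ S : Finset (Fin N), Gᶜ.IsNClique (k + 1) S)} with hRSet
  -- Erdős–Szekeres: C(d+k,k) is a Ramsey bound
  have hmem : (d + k).choose k ∈ RSet := by
    intro G
    have hcard : (d + k).choose d ≤ (Finset.univ : Finset (Fin ((d + k).choose k))).card := by
      rw [Finset.card_univ, Fintype.card_fin, Nat.choose_symm_add]
    rcases ES (d + k) d k le_rfl G Finset.univ hcard with ⟨S, _, hS⟩ | ⟨S, _, hS⟩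
    · exact Or.inl ⟨S, hS⟩
    · exact Or.inr ⟨S, hS⟩
  -- every member of RSet exceeds |A|
  have key : ∀ N ∈ RSet, A.card < N := by
    intro N hN
    by_contra hle
    push_neg at hle
    obtain ⟨A', hA'sub, hA'card⟩ := Finset.exists_subset_card_eq hle
    let e : {x // x ∈ A'} ≃ Fin N := A'.equivFin.trans (finCongr hA'card)
    let f : Fin N → (Fin d → F) := fun i => (e.symm i : Fin d → F)
    have hfinj : Function.Injective f := fun i j hij => by
      have : e.symm i = e.symm j := Subtype.ext hij
      simpa using congrArg e this
    have hfA : ∀ i, f i ∈ A := fun i => hA'sub (e.symm i).2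
    let G : SimpleGraph (Fin N) :=
      { Adj := fun i j => i ≠ j ∧ ∑ x, f i x * f j x = 0
        symm := by
          constructor
          intro i j ⟨h1, h2⟩
          refine ⟨h1.symm, ?_⟩
          rw [← h2]
          exact Finset.sum_congr rfl fun x _ => mul_comm _ _
        loopless := ⟨fun i h => h.1 rfl⟩ }
    rcases hN G with ⟨S, hS⟩ | ⟨S, hS⟩
    · -- a (d+1)-clique gives d+1 pairwise orthogonal vectors: impossible
      let B : LinearMap.BilinForm F (Fin d → F) := Matrix.toBilin' (1 : Matrix (Fin d) (Fin d) F)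
      have hB : ∀ u v : Fin d → F, B u v = ∑ x, u x * v x := by
        intro u v
        rw [Matrix.toBilin'_apply', Matrix.one_mulVec]
        rfl
      have hli : LinearIndependent F (fun i : {x // x ∈ S} => f i) := by
        apply LinearMap.BilinForm.linearIndependent_of_iIsOrtho (B := B)
        · rw [LinearMap.BilinForm.iIsOrtho_def]
          intro ⟨i, hi⟩ ⟨j, hj⟩ hij
          have hij' : i ≠ j := fun h => hij (Subtype.ext h)
          have hadj : G.Adj i j := hS.1 hi hj hij'
          rw [hB]
          exact hadj.2
        · intro ⟨i, hi⟩
          have := hns (f i) (hfA i)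
          simpa [LinearMap.BilinForm.IsOrtho, hB] using this
      have hcard : Fintype.card {x // x ∈ S} ≤ Module.finrank F (Fin d → F) :=
        hli.fintype_card_le_finrank
      rw [Fintype.card_coe, hS.2, Module.finrank_fin_fun] at hcard
      omega
    · -- a (k+1)-independent set contradicts near-orthogonality
      let T := S.image f
      have hTsub : T ⊆ A := by
        intro u hu
        obtain ⟨i, _, rfl⟩ := Finset.mem_image.mp hu
        exact hfA i
      have hTcard : T.card = k + 1 := by
        rw [Finset.card_image_of_injective _ hfinj, hS.2]
      obtain ⟨u, hu, v, hv, huv, hsum⟩ := hno T hTsub hTcard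
      obtain ⟨i, hi, rfl⟩ := Finset.mem_image.mp hu
      obtain ⟨j, hj, rfl⟩ := Finset.mem_image.mp hv
      have hij : i ≠ j := fun h => huv (by rw [h])
      have hadj : Gᶜ.Adj i j := hS.1 hi hj hij
      exact hadj.2 ⟨hij, hsum⟩
  have hne : RSet.Nonempty := ⟨_, hmem⟩
  have hsinf : ramseyNumber (d + 1) (k + 1) ∈ RSet := by
    rw [ramseyNumber, ← hRSet]
    exact Nat.sInf_mem hne
  exact ⟨key _ hsinf, key _ hmem⟩
end

section
/- For every prime p and every integer t ≥ 1, the orthogonality graph G(p,t) is an (n,d,λ)-graph with n = p^t − 1, d = p^{t−1} − 1, and λ = (p−1)·p^{t/2−1}. -/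
open Finset
variable {p : ℕ} [Fact p.Prime] {t : ℕ}

private def dotL (t p : ℕ) [Fact p.Prime] (u : Fin t → ZMod p) :
    (Fin t → ZMod p) →ₗ[ZMod p] ZMod p where
  toFun v := ∑ i, v i * u i
  map_add' a b := by simp [add_mul, Finset.sum_add_distrib]
  map_smul' c a := by simp [Finset.mul_sum, mul_assoc]

private lemma dotL_apply (u v : Fin t → ZMod p) : dotL t p u v = ∑ i, v i * u i := rfl

private lemma dotL_single (u : Fin t → ZMod p) (j : Fin t) :
    dotL t p u (Pi.single j 1) = u j := by
  rw [dotL_apply, Finset.sum_eq_single j (fun i _ hi => by simp [Pi.single_eq_of_ne hi])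
    (fun h => absurd (Finset.mem_univ j) h)]
  simp

private lemma dotL_surj (u : Fin t → ZMod p) (hu : u ≠ 0) :
    Function.Surjective (dotL t p u) := by
  obtain ⟨i, hi⟩ : ∃ i, u i ≠ 0 := by
    by_contra h; push_neg at h; exact hu (funext fun i => h i)
  intro a
  refine ⟨Pi.single i (a * (u i)⁻¹), ?_⟩
  rw [dotL_apply, Finset.sum_eq_single i (fun j _ hj => by simp [Pi.single_eq_of_ne hj])
    (fun h => absurd (Finset.mem_univ i) h)]
  simp [mul_assoc, inv_mul_cancel₀ hi]

private lemma card_ker_mul {W : Type*} [AddCommGroup W] [Module (ZMod p) W] [Fintype W]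
    (f : (Fin t → ZMod p) →ₗ[ZMod p] W) (hf : Function.Surjective f) :
    Nat.card (LinearMap.ker f) * Fintype.card W = p ^ t := by
  classical
  have h1 := Submodule.card_eq_card_quotient_mul_card (LinearMap.ker f)
  have e := f.quotKerEquivOfSurjective hf
  have h2 : Nat.card ((Fin t → ZMod p) ⧸ LinearMap.ker f) = Fintype.card W := by
    rw [Nat.card_congr e.toEquiv, Nat.card_eq_fintype_card]
  have h3 : Nat.card (Fin t → ZMod p) = p ^ t := by
    rw [Nat.card_eq_fintype_card]; simp [ZMod.card]
  rw [h2] at h1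
  rw [← h3, h1, mul_comm]


private lemma pair_surj (u w : Fin t → ZMod p) (hu : u ≠ 0)
    (hind : ∀ c : ZMod p, w ≠ c • u) :
    Function.Surjective ((dotL t p u).prod (dotL t p w)) := by
  obtain ⟨v₁, hv₁⟩ := dotL_surj u hu 1
  have h2 : ∃ v₂, dotL t p u v₂ = 0 ∧ dotL t p w v₂ ≠ 0 := by
    by_contra h
    push_neg at h
    have key : ∀ v, dotL t p w v = dotL t p u v * dotL t p w v₁ := by
      intro v
      have h0 : dotL t p u (v - dotL t p u v • v₁) = 0 := by
        simp [map_sub, map_smul, hv₁, smul_eq_mul]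
      have := h _ h0
      rw [map_sub, map_smul, smul_eq_mul, sub_eq_zero] at this
      exact this
    refine hind (dotL t p w v₁) (funext fun j => ?_)
    have := key (Pi.single j 1)
    rw [dotL_single, dotL_single] at this
    simpa [mul_comm] using this
  obtain ⟨v₂, hv₂u, hv₂w⟩ := h2
  rintro ⟨a, b⟩
  set e := dotL t p w v₁ with he
  set d := dotL t p w v₂ with hd
  refine ⟨a • v₁ + ((b - a * e) * d⁻¹) • v₂, ?_⟩
  have : dotL t p u (a • v₁ + ((b - a * e) * d⁻¹) • v₂) = a ∧
      dotL t p w (a • v₁ + ((b - a * e) * d⁻¹) • v₂) = b := by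
    constructor
    · simp [map_add, map_smul, hv₁, hv₂u, smul_eq_mul]
    · rw [map_add, map_smul, map_smul, smul_eq_mul, smul_eq_mul, ← he, ← hd]
      field_simp
      ring
  simp [LinearMap.prod_apply, this.1, this.2, Prod.ext_iff]

/-- count of solutions of one nonzero linear equation -/
private lemma cardSolOne (u : Fin t → ZMod p) (hu : u ≠ 0) :
    (univ.filter fun v : Fin t → ZMod p => ∑ i, v i * u i = 0).card = p ^ (t - 1) := by
  have key := card_ker_mul (dotL t p u) (dotL_surj u hu)
  have hc : (univ.filter fun v : Fin t → ZMod p => ∑ i, v i * u i = 0).card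
      = Nat.card (LinearMap.ker (dotL t p u)) := by
    rw [Nat.card_congr (Equiv.subtypeEquivRight
      (fun v => (LinearMap.mem_ker (f := dotL t p u)).symm) :
        {v : Fin t → ZMod p // dotL t p u v = 0} ≃ _).symm,
      Nat.card_eq_fintype_card, Fintype.card_subtype]
    rfl
  have hp : Fintype.card (ZMod p) = p := ZMod.card p
  rw [hc]
  have hppos : 0 < p := (Fact.out : p.Prime).pos
  rcases Nat.eq_zero_or_pos t with ht | ht
  · exfalso
    exact hu (funext fun i => (Nat.not_lt_zero _ (lt_of_lt_of_le i.2 (le_of_eq ht))).elim)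
  · have hh : p ^ t = p ^ (t - 1) * p := by
      rw [← pow_succ, Nat.sub_add_cancel ht]
    rw [hp, hh] at key
    exact Nat.eq_of_mul_eq_mul_right hppos key

private lemma cardSolTwo (u w : Fin t → ZMod p) (hu : u ≠ 0)
    (hind : ∀ c : ZMod p, w ≠ c • u) :
    (univ.filter fun v : Fin t → ZMod p =>
      (∑ i, v i * u i = 0 ∧ ∑ i, v i * w i = 0)).card = p ^ (t - 2) := by
  have key := card_ker_mul ((dotL t p u).prod (dotL t p w)) (pair_surj u w hu hind)
  have hc : (univ.filter fun v : Fin t → ZMod p =>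
      (∑ i, v i * u i = 0 ∧ ∑ i, v i * w i = 0)).card
      = Nat.card (LinearMap.ker ((dotL t p u).prod (dotL t p w))) := by
    rw [Nat.card_congr (Equiv.subtypeEquivRight (fun v => ?_) :
        {v : Fin t → ZMod p // ∑ i, v i * u i = 0 ∧ ∑ i, v i * w i = 0} ≃ _).symm,
      Nat.card_eq_fintype_card, Fintype.card_subtype]
    rw [LinearMap.mem_ker, LinearMap.prod_apply, Prod.mk_eq_zero]
    exact Iff.rfl
  have hp : Fintype.card (ZMod p × ZMod p) = p * p := by
    rw [Fintype.card_prod, ZMod.card]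
  -- t ≥ 2 : since u and w are independent
  have ht2 : 2 ≤ t := by
    by_contra hlt
    push_neg at hlt
    interval_cases t
    · exact hu (funext fun i => (Nat.not_lt_zero _ i.2).elim)
    · -- t = 1 : w = (w 0 / u 0) • u
      have hu0 : u 0 ≠ 0 := fun h =>
        hu (funext fun i => by rw [Subsingleton.elim i 0]; exact h)
      refine hind (w 0 * (u 0)⁻¹) (funext fun i => ?_)
      rw [Subsingleton.elim i 0]
      simp [mul_assoc, inv_mul_cancel₀ hu0]
  have hh : p ^ t = p ^ (t - 2) * (p * p) := by
    rw [← mul_assoc, ← pow_succ, ← pow_succ]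
    congr 1
    clear key hc
    omega
  rw [hp, hh] at key
  have hppos : 0 < p * p := Nat.mul_pos (Fact.out : p.Prime).pos (Fact.out : p.Prime).pos
  rw [hc]
  exact Nat.eq_of_mul_eq_mul_right hppos key

private lemma card_sub (P : (Fin t → ZMod p) → Prop) [DecidablePred P] (hP0 : P 0) :
    (univ.filter fun v : {v : Fin t → ZMod p // v ≠ 0} => P v.1).card + 1
      = (univ.filter P).card := by
  classical
  have h1 : (univ.filter fun v : {v : Fin t → ZMod p // v ≠ 0} => P v.1).card
      = Fintype.card {v : {v : Fin t → ZMod p // v ≠ 0} // P v.1} :=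
    (Fintype.card_subtype _).symm
  have e : {v : {v : Fin t → ZMod p // v ≠ 0} // P v.1}
      ≃ {v : Fin t → ZMod p // v ≠ 0 ∧ P v} :=
    Equiv.subtypeSubtypeEquivSubtypeInter _ _
  have h2 : Fintype.card {v : Fin t → ZMod p // v ≠ 0 ∧ P v}
      = ((univ.filter P).erase 0).card := by
    rw [Fintype.card_subtype]
    congr 1
    ext v
    simp only [mem_filter, mem_univ, true_and, mem_erase]
  have h0 : (0 : Fin t → ZMod p) ∈ univ.filter P := by simp [hP0]
  rw [h1, Fintype.card_congr e, h2, Finset.card_erase_of_mem h0,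
    Nat.sub_add_cancel (Finset.card_pos.mpr ⟨0, h0⟩)]

open Finset in
/-- For every prime `p` and integer `t ≥ 1`, the orthogonality graph `G(p,t)`
(vertices: nonzero vectors of `F_p^t`; `u ~ v` iff `⟪u,v⟫ = 0`, loops allowed)
is an `(n,d,λ)`-graph with `n = p^t − 1`, `d = p^(t−1) − 1` and
`λ = (p−1)·p^(t/2−1)`: it has `p^t − 1` vertices, is `(p^(t−1) − 1)`-regular,
and its adjacency matrix satisfies the spectral bound with `λ` on the
orthogonal complement of the all-ones vector. -/
theorem stmt_7 (p : ℕ) [Fact p.Prime] (t : ℕ) (ht : 1 ≤ t) :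
    Fintype.card {v : Fin t → ZMod p // v ≠ 0} = p ^ t - 1 ∧
    (∀ v : {v : Fin t → ZMod p // v ≠ 0},
      (univ.filter (fun w : {v : Fin t → ZMod p // v ≠ 0} =>
        ∑ i, v.1 i * w.1 i = 0)).card = p ^ (t - 1) - 1) ∧
    (∀ x : {v : Fin t → ZMod p // v ≠ 0} → ℝ, (∑ v, x v) = 0 →
      ∑ v, ((Matrix.of fun u w : {v : Fin t → ZMod p // v ≠ 0} =>
          if (∑ i, u.1 i * w.1 i) = 0 then (1 : ℝ) else 0).mulVec x v) ^ 2 ≤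
        (((p : ℝ) - 1) * (p : ℝ) ^ ((t : ℝ) / 2 - 1)) ^ 2 * ∑ v, (x v) ^ 2) := by
  classical
  have hp2 : 2 ≤ p := (Fact.out : p.Prime).two_le
  refine ⟨?_, ?_, ?_⟩
  · -- part 1
    rw [Fintype.card_subtype]
    rw [show (univ.filter fun v : Fin t → ZMod p => v ≠ 0) = univ.erase 0 from
      Finset.filter_ne' univ 0]
    rw [Finset.card_erase_of_mem (mem_univ 0), Finset.card_univ]
    simp [ZMod.card]
  · -- part 2
    intro v
    have h := card_sub (fun w : Fin t → ZMod p => ∑ i, v.1 i * w i = 0) (by simp)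
    have h2 : (univ.filter fun w : Fin t → ZMod p => ∑ i, v.1 i * w i = 0)
        = (univ.filter fun w : Fin t → ZMod p => ∑ i, w i * v.1 i = 0) := by
      apply Finset.filter_congr
      intro w _
      simp [mul_comm]
    rw [h2, cardSolOne v.1 v.2] at h
    exact Nat.eq_sub_of_add_eq h
  · -- part 3
    intro x hx
    by_cases h1 : t = 1
    · subst h1
      have hnz : ∀ u : {v : Fin 1 → ZMod p // v ≠ 0}, u.1 0 ≠ 0 := fun u h =>
        u.2 (funext fun i => by rw [Subsingleton.elim i 0]; exact h)
      have hz : ∀ v : {v : Fin 1 → ZMod p // v ≠ 0},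
          (Matrix.of fun u w : {v : Fin 1 → ZMod p // v ≠ 0} =>
          if (∑ i, u.1 i * w.1 i) = 0 then (1 : ℝ) else 0).mulVec x v = 0 := by
        intro v
        rw [Matrix.mulVec]
        apply Finset.sum_eq_zero
        intro w _
        simp only [Matrix.of_apply, Fin.sum_univ_one]
        rw [if_neg (mul_ne_zero (hnz v) (hnz w)), zero_mul]
      have hzz : ∑ v, ((Matrix.of fun u w : {v : Fin 1 → ZMod p // v ≠ 0} =>
          if (∑ i, u.1 i * w.1 i) = 0 then (1 : ℝ) else 0).mulVec x v) ^ 2 = 0 :=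
        Finset.sum_eq_zero fun v _ => by rw [hz v]; exact zero_pow two_ne_zero
      rw [hzz]
      positivity
    have ht2 : 2 ≤ t := by omega
    set dd : {v : Fin t → ZMod p // v ≠ 0} → {v : Fin t → ZMod p // v ≠ 0} → ZMod p := fun u w => ∑ i, u.1 i * w.1 i with hdd
    set B : ℝ := (p:ℝ)^(t-1) - (p:ℝ)^(t-2) with hB
    set C : ℝ := (p:ℝ)^(t-2) - 1 with hC
    set m : (ZMod p)ˣ → {v : Fin t → ZMod p // v ≠ 0} → {v : Fin t → ZMod p // v ≠ 0} := fun c u => ⟨(c : ZMod p) • u.1,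
      smul_ne_zero (Units.ne_zero c) u.2⟩ with hm
    have key2 : ∀ u w : {v : Fin t → ZMod p // v ≠ 0},
        (((univ.filter fun v : {v : Fin t → ZMod p // v ≠ 0} => dd v u = 0 ∧ dd v w = 0).card : ℕ) : ℝ)
          = C + ∑ c : (ZMod p)ˣ, if w = m c u then B else 0 := by
      intro u w
      by_cases hdep : ∃ c : (ZMod p)ˣ, w = m c u
      · obtain ⟨c₀, hc₀⟩ := hdep
        have hfil : (univ.filter fun v : {v : Fin t → ZMod p // v ≠ 0} => dd v u = 0 ∧ dd v w = 0)
            = (univ.filter fun v : {v : Fin t → ZMod p // v ≠ 0} => dd v u = 0) := by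
          apply Finset.filter_congr
          intro v _
          have hw1 : w.1 = (c₀ : ZMod p) • u.1 := by rw [hc₀]
          have : dd v w = (c₀ : ZMod p) * dd v u := by
            simp only [hdd, hw1, Pi.smul_apply, smul_eq_mul, Finset.mul_sum]
            exact Finset.sum_congr rfl fun i _ => by ring
          constructor
          · exact fun h => by simpa using h.1
          · intro h
            exact ⟨h, by rw [this, h, mul_zero]⟩
        have hcnt := card_sub (fun v : Fin t → ZMod p => ∑ i, v i * u.1 i = 0) (by simp)
        rw [cardSolOne u.1 u.2] at hcnt
        have hdval : (univ.filter fun v : {v : Fin t → ZMod p // v ≠ 0} => dd v u = 0).card = p ^ (t-1) - 1 := by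
          have : (univ.filter fun v : {v : Fin t → ZMod p // v ≠ 0} => dd v u = 0)
              = (univ.filter fun v : {v : Fin t → ZMod p // v ≠ 0} => ∑ i, v.1 i * u.1 i = 0) := rfl
          rw [this]
          exact Nat.eq_sub_of_add_eq hcnt
        have hsum : (∑ c : (ZMod p)ˣ, if w = m c u then B else 0) = B := by
          rw [Finset.sum_eq_single c₀ (fun c _ hc => ?_) (fun h => absurd (mem_univ c₀) h)]
          · rw [if_pos hc₀]
          · rw [if_neg]
            intro hce
            apply hc
            have h2 : (c : ZMod p) • u.1 = (c₀ : ZMod p) • u.1 :=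
              congrArg Subtype.val (hce ▸ hc₀)
            have h3 : ((c : ZMod p) - (c₀ : ZMod p)) • u.1 = 0 := by
              rw [sub_smul, h2, sub_self]
            rcases smul_eq_zero.mp h3 with h4 | h4
            · exact Units.ext (by rwa [sub_eq_zero] at h4)
            · exact absurd h4 u.2
        rw [hfil, hdval, hsum]
        have : ((p ^ (t-1) - 1 : ℕ) : ℝ) = (p:ℝ)^(t-1) - 1 := by
          rw [Nat.cast_sub (Nat.one_le_pow _ _ (by clear * - hp2; omega))]
          push_cast
          ring
        rw [this, hC, hB]
        ring
      · push_neg at hdep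
        have hind : ∀ c : ZMod p, w.1 ≠ c • u.1 := by
          intro c hcw
          by_cases hc0 : c = 0
          · exact w.2 (by rw [hcw, hc0, zero_smul])
          · exact hdep (Units.mk0 c hc0) (Subtype.ext hcw)
        have hfil : (univ.filter fun v : {v : Fin t → ZMod p // v ≠ 0} => dd v u = 0 ∧ dd v w = 0)
            = (univ.filter fun v : {v : Fin t → ZMod p // v ≠ 0} =>
                (∑ i, v.1 i * u.1 i = 0 ∧ ∑ i, v.1 i * w.1 i = 0)) := rfl
        have hcnt := card_sub (fun v : Fin t → ZMod p =>
          ∑ i, v i * u.1 i = 0 ∧ ∑ i, v i * w.1 i = 0) (by simp)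
        rw [cardSolTwo u.1 w.1 u.2 hind] at hcnt
        have hzero : (∑ c : (ZMod p)ˣ, if w = m c u then B else 0) = 0 :=
          Finset.sum_eq_zero fun c _ => if_neg (hdep c)
        rw [hfil, hzero]
        have hpow : 1 ≤ p ^ (t - 2) := Nat.one_le_pow _ _ (by clear * - hp2; omega)
        have hval : (univ.filter fun v : {v : Fin t → ZMod p // v ≠ 0} =>
            (∑ i, v.1 i * u.1 i = 0 ∧ ∑ i, v.1 i * w.1 i = 0)).card = p ^ (t-2) - 1 := by
          exact Nat.eq_sub_of_add_eq hcnt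
        rw [hval, Nat.cast_sub hpow, hC]
        push_cast
        ring
    -- step 1: expand the quadratic form
    have hmv : ∀ v : {v : Fin t → ZMod p // v ≠ 0}, (Matrix.of fun u w : {v : Fin t → ZMod p // v ≠ 0} =>
        if (∑ i, u.1 i * w.1 i) = 0 then (1 : ℝ) else 0).mulVec x v
        = ∑ w, if dd v w = 0 then x w else 0 := by
      intro v
      rw [Matrix.mulVec]
      refine Finset.sum_congr rfl fun w _ => ?_
      simp only [Matrix.of_apply, ite_mul, one_mul, zero_mul]
      rfl
    have key1 : ∑ v, ((Matrix.of fun u w : {v : Fin t → ZMod p // v ≠ 0} =>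
        if (∑ i, u.1 i * w.1 i) = 0 then (1 : ℝ) else 0).mulVec x v) ^ 2
        = ∑ c : (ZMod p)ˣ, ∑ u, x u * x (m c u) * B := by
      calc ∑ v, ((Matrix.of fun u w : {v : Fin t → ZMod p // v ≠ 0} =>
            if (∑ i, u.1 i * w.1 i) = 0 then (1 : ℝ) else 0).mulVec x v) ^ 2
          = ∑ v : {v : Fin t → ZMod p // v ≠ 0}, ∑ u : {v : Fin t → ZMod p // v ≠ 0}, ∑ w : {v : Fin t → ZMod p // v ≠ 0},
              (if dd v u = 0 ∧ dd v w = 0 then x u * x w else 0) := by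
            refine Finset.sum_congr rfl fun v _ => ?_
            rw [hmv v, sq, Finset.sum_mul_sum]
            refine Finset.sum_congr rfl fun u _ => Finset.sum_congr rfl fun w _ => ?_
            by_cases hA : dd v u = 0 <;> by_cases hB2 : dd v w = 0 <;> simp [hA, hB2]
        _ = ∑ u : {v : Fin t → ZMod p // v ≠ 0}, ∑ w : {v : Fin t → ZMod p // v ≠ 0}, (x u * x w) *
              (((univ.filter fun v : {v : Fin t → ZMod p // v ≠ 0} => dd v u = 0 ∧ dd v w = 0).card : ℕ) : ℝ) := by
            rw [Finset.sum_comm]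
            refine Finset.sum_congr rfl fun u _ => ?_
            rw [Finset.sum_comm]
            refine Finset.sum_congr rfl fun w _ => ?_
            have hterm : ∀ v : {v : Fin t → ZMod p // v ≠ 0}, (if dd v u = 0 ∧ dd v w = 0 then x u * x w else 0)
                = (x u * x w) * (if dd v u = 0 ∧ dd v w = 0 then 1 else 0) := fun v => by
              split_ifs <;> simp
            rw [Finset.sum_congr rfl fun v _ => hterm v, ← Finset.mul_sum,
              Finset.sum_boole]
        _ = ∑ u : {v : Fin t → ZMod p // v ≠ 0}, ∑ w : {v : Fin t → ZMod p // v ≠ 0}, (x u * x w) *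
              (C + ∑ c : (ZMod p)ˣ, if w = m c u then B else 0) := by
            refine Finset.sum_congr rfl fun u _ => Finset.sum_congr rfl fun w _ => ?_
            rw [key2 u w]
        _ = ∑ c : (ZMod p)ˣ, ∑ u, x u * x (m c u) * B := by
            have expand : ∀ u w : {v : Fin t → ZMod p // v ≠ 0}, (x u * x w) *
                (C + ∑ c : (ZMod p)ˣ, if w = m c u then B else 0)
                = (x u * C) * x w
                  + ∑ c : (ZMod p)ˣ, (if w = m c u then x u * x w * B else 0) := by
              intro u w
              rw [mul_add, Finset.mul_sum]
              congr 1
              · ring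
              · refine Finset.sum_congr rfl fun c _ => ?_
                split_ifs <;> ring
            rw [Finset.sum_congr rfl fun u _ => Finset.sum_congr rfl fun w _ => expand u w]
            rw [Finset.sum_congr rfl fun u _ => Finset.sum_add_distrib]
            rw [Finset.sum_add_distrib]
            have inner : ∀ u : {v : Fin t → ZMod p // v ≠ 0},
                ∑ w : {v : Fin t → ZMod p // v ≠ 0}, ∑ c : (ZMod p)ˣ,
                  (if w = m c u then x u * x w * B else 0)
                = ∑ c : (ZMod p)ˣ, x u * x (m c u) * B := fun u => by
              rw [Finset.sum_comm]
              refine Finset.sum_congr rfl fun c _ => ?_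
              rw [Finset.sum_ite_eq' univ (m c u) (fun w => x u * x w * B),
                if_pos (mem_univ _)]
            have e1 : ∑ u : {v : Fin t → ZMod p // v ≠ 0}, ∑ w : {v : Fin t → ZMod p // v ≠ 0}, (x u * C) * x w = 0 := by
              refine Finset.sum_eq_zero fun u _ => ?_
              rw [← Finset.mul_sum, hx, mul_zero]
            rw [e1, zero_add]
            rw [Finset.sum_congr rfl fun u _ => inner u, Finset.sum_comm]
    -- step 4 : bound each inner sum
    have hbij : ∀ c : (ZMod p)ˣ, ∑ u, (x (m c u))^2 = ∑ v, (x v)^2 := by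
      intro c
      exact Fintype.sum_equiv
        ⟨m c, m c⁻¹,
          fun u => Subtype.ext (by
            simp only [hm, smul_smul]
            rw [show ((c⁻¹ : (ZMod p)ˣ) : ZMod p) * (c : ZMod p) = 1 by
              rw [← Units.val_mul, inv_mul_cancel c, Units.val_one], one_smul]),
          fun u => Subtype.ext (by
            simp only [hm, smul_smul]
            rw [show ((c : (ZMod p)ˣ) : ZMod p) * ((c⁻¹ : (ZMod p)ˣ) : ZMod p) = 1 by
              rw [← Units.val_mul, mul_inv_cancel c, Units.val_one], one_smul])⟩
        (fun u => (x (m c u))^2) (fun v => (x v)^2) (fun u => rfl)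
    have key4 : ∀ c : (ZMod p)ˣ, ∑ u, x u * x (m c u) ≤ ∑ v, (x v)^2 := by
      intro c
      calc ∑ u, x u * x (m c u)
          ≤ ∑ u, ((x u)^2 + (x (m c u))^2)/2 :=
            Finset.sum_le_sum fun u _ => by nlinarith [sq_nonneg (x u - x (m c u))]
        _ = ((∑ u, (x u)^2) + ∑ u, (x (m c u))^2)/2 := by
            rw [← Finset.sum_div, Finset.sum_add_distrib]
        _ = ∑ v, (x v)^2 := by rw [hbij c]; ring
    have hBnn : 0 ≤ B := by
      rw [hB, sub_nonneg]
      apply pow_le_pow_right₀ (by exact_mod_cast Nat.one_le_of_lt hp2)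
      clear * - ht2
      omega
    have hsq : 0 ≤ ∑ v, (x v)^2 := Finset.sum_nonneg fun v _ => sq_nonneg _
    rw [key1]
    have hbound : ∑ c : (ZMod p)ˣ, ∑ u, x u * x (m c u) * B
        ≤ ((p : ℝ) - 1) * (∑ v, (x v)^2) * B := by
      have : ∀ c : (ZMod p)ˣ, ∑ u, x u * x (m c u) * B ≤ (∑ v, (x v)^2) * B := by
        intro c
        rw [← Finset.sum_mul]
        exact mul_le_mul_of_nonneg_right (key4 c) hBnn
      calc ∑ c : (ZMod p)ˣ, ∑ u, x u * x (m c u) * B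
          ≤ ∑ c : (ZMod p)ˣ, (∑ v, (x v)^2) * B :=
            Finset.sum_le_sum fun c _ => this c
        _ = (Fintype.card (ZMod p)ˣ : ℝ) * ((∑ v, (x v)^2) * B) := by
            rw [Finset.sum_const, Finset.card_univ, nsmul_eq_mul]
        _ = ((p : ℝ) - 1) * (∑ v, (x v)^2) * B := by
            rw [ZMod.card_units, Nat.cast_sub (by clear * - hp2; omega : 1 ≤ p)]
            push_cast
            ring
    refine hbound.trans (le_of_eq ?_)
    have hpnn : (0:ℝ) ≤ (p:ℝ) := by positivity
    have hR : ((p:ℝ) ^ ((t:ℝ)/2 - 1))^2 = (p:ℝ)^(t-2) := by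
      rw [← Real.rpow_natCast ((p:ℝ) ^ ((t:ℝ)/2 - 1)) 2, ← Real.rpow_mul hpnn]
      have hexp : ((t:ℝ)/2 - 1) * ((2:ℕ):ℝ) = ((t - 2 : ℕ) : ℝ) := by
        rw [Nat.cast_sub ht2]
        push_cast
        ring
      rw [hexp, Real.rpow_natCast]
    have hP1 : (p:ℝ)^(t-1) = (p:ℝ)^(t-2) * p := by
      rw [← pow_succ]
      congr 1
      clear * - ht2
      omega
    calc ((p : ℝ) - 1) * (∑ v, (x v)^2) * B
        = ((p:ℝ)-1)^2 * (p:ℝ)^(t-2) * (∑ v, (x v)^2) := by rw [hB, hP1]; ring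
      _ = (((p : ℝ) - 1) * (p : ℝ) ^ ((t : ℝ) / 2 - 1)) ^ 2 * ∑ v, (x v) ^ 2 := by
          rw [mul_pow, hR]
end

section
/- For every prime p, there exists a constant c = c(p) such that for all positive integers t and k, the number of pairs (C_1, C_2) of subsets of F_p^t \ {0} with |C_1| ≤ k and |C_2| ≤ k, such that <v_1, v_2> ≠ 0 for all v_1 ∈ C_1 and v_2 ∈ C_2, is at most 2^{c(t² + k)} · p^{tk}. -/
open Finset

section LinAlg

variable {p t : ℕ} [Fact p.Prime]

def dotp (x y : Fin t → ZMod p) : ZMod p := ∑ i, x i * y i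

def dlin (y : Fin t → ZMod p) : (Fin t → ZMod p) →ₗ[ZMod p] ZMod p where
  toFun x := dotp x y
  map_add' a b := by simp [dotp, add_mul, Finset.sum_add_distrib]
  map_smul' c a := by simp [dotp, Finset.mul_sum, mul_assoc]

lemma dlin_apply (y x : Fin t → ZMod p) : dlin y x = dotp x y := rfl

lemma exists_dot_eq_one {y : Fin t → ZMod p} (hy : y ≠ 0) : ∃ x, dotp x y = 1 := by
  obtain ⟨i, hi⟩ := Function.ne_iff.mp hy
  refine ⟨fun j => if j = i then (y i)⁻¹ else 0, ?_⟩
  have h2 : ∀ j ∈ (univ : Finset (Fin t)), j ≠ i → (if j = i then (y i)⁻¹ else 0) * y j = 0 := by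
    intro j _ hj; simp [hj]
  rw [dotp, Finset.sum_eq_single i (fun j h hj => h2 j h hj) (by simp)]
  simp [inv_mul_cancel₀ (by simpa using hi)]

lemma dlin_surj {y : Fin t → ZMod p} (hy : y ≠ 0) : LinearMap.range (dlin y) = ⊤ := by
  rcases Ideal.eq_bot_or_top (LinearMap.range (dlin y)) with h | h
  · exfalso
    obtain ⟨x, hx⟩ := exists_dot_eq_one hy
    have h1 : (1 : ZMod p) ∈ LinearMap.range (dlin y) := ⟨x, hx⟩
    rw [h, Submodule.mem_bot] at h1
    exact one_ne_zero h1
  · exact h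

lemma finrank_ker_dlin {y : Fin t → ZMod p} (hy : y ≠ 0) :
    Module.finrank (ZMod p) (LinearMap.ker (dlin y)) = t - 1 := by
  have h := LinearMap.finrank_range_add_finrank_ker (dlin y)
  rw [dlin_surj hy, finrank_top, Module.finrank_self] at h
  have ht : Module.finrank (ZMod p) (Fin t → ZMod p) = t := by
    simp [Module.finrank_pi]
  omega

lemma card_ker_one (y : Fin t → ZMod p) (hy : y ≠ 0) (ht : 1 ≤ t) :
    ((univ : Finset (Fin t → ZMod p)).filter fun x => dotp x y = 0).card * p = p ^ t := by
  have e1 : ((univ : Finset (Fin t → ZMod p)).filter fun x => dotp x y = 0).card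
      = Nat.card {x : Fin t → ZMod p // dotp x y = 0} := by
    rw [Nat.card_eq_fintype_card, Fintype.card_subtype]
  have e2 : Nat.card {x : Fin t → ZMod p // dotp x y = 0}
      = Nat.card (LinearMap.ker (dlin y)) :=
    Nat.card_congr (Equiv.subtypeEquivRight (fun x => by
      simp [LinearMap.mem_ker, dlin_apply]))
  have e3 : Nat.card (LinearMap.ker (dlin y)) = p ^ (t - 1) := by
    haveI : Fintype (LinearMap.ker (dlin y)) := Fintype.ofFinite _
    rw [Nat.card_eq_fintype_card, Module.card_eq_pow_finrank (K := ZMod p), ZMod.card,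
      finrank_ker_dlin hy]
  rw [e1, e2, e3, ← pow_succ]
  congr 1
  omega

end LinAlg

section LinAlg2

variable {p t : ℕ} [Fact p.Prime]

lemma dotp_single (i : Fin t) (z : Fin t → ZMod p) : dotp (Pi.single i 1) z = z i := by
  rw [dotp, Finset.sum_eq_single i (fun j _ hj => by simp [Pi.single_eq_of_ne hj]) (by simp)]
  simp

lemma dep_of_forall {y y' : Fin t → ZMod p} (hy : y ≠ 0)
    (h0 : ∀ x, dotp x y = 0 → dotp x y' = 0) : ∃ c : ZMod p, y' = c • y := by
  obtain ⟨x₀, hx₀⟩ := exists_dot_eq_one hy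
  refine ⟨dotp x₀ y', ?_⟩
  funext i
  have hxi : dotp (Pi.single i 1 - y i • x₀) y = 0 := by
    have := map_sub (dlin y) (Pi.single i 1) (y i • x₀)
    rw [dlin_apply] at this
    rw [this, dlin_apply, dotp_single, map_smul, dlin_apply, hx₀]
    simp [mul_comm]
  have h2 := h0 _ hxi
  have h3 := map_sub (dlin y') (Pi.single i 1) (y i • x₀)
  rw [dlin_apply] at h3
  rw [h3, dlin_apply, dotp_single, map_smul, dlin_apply] at h2
  have : y' i = y i * dotp x₀ y' := by
    have := sub_eq_zero.mp h2
    simpa using this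
  simpa [mul_comm] using this

lemma card_ker_two (y y' : Fin t → ZMod p) (hy : y ≠ 0)
    (hdep : ¬ ∃ c : ZMod p, y' = c • y) :
    ((univ : Finset (Fin t → ZMod p)).filter
      fun x => dotp x y = 0 ∧ dotp x y' = 0).card * (p * p) = p ^ t := by
  set S := LinearMap.ker (dlin y) with hS
  set ψ : S →ₗ[ZMod p] ZMod p := (dlin y').comp S.subtype with hψ
  have hψ0 : ∃ s : S, ψ s ≠ 0 := by
    by_contra hcon
    push_neg at hcon
    refine hdep (dep_of_forall hy (fun x hx => ?_))
    have := hcon ⟨x, by rw [hS, LinearMap.mem_ker, dlin_apply]; exact hx⟩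
    simpa [hψ, dlin_apply] using this
  have hrange : LinearMap.range ψ = ⊤ := by
    rcases Ideal.eq_bot_or_top (LinearMap.range ψ) with h | h
    · exfalso
      obtain ⟨s, hs⟩ := hψ0
      exact hs (by simpa [h, Submodule.mem_bot] using LinearMap.mem_range_self ψ s)
    · exact h
  have hfk := LinearMap.finrank_range_add_finrank_ker ψ
  rw [hrange, finrank_top, Module.finrank_self, finrank_ker_dlin hy] at hfk
  -- hfk : 1 + finrank (ker ψ) = t - 1
  have ht2 : 2 ≤ t := by
    have h1 : 1 ≤ t - 1 := by omega
    rcases Nat.eq_zero_or_pos t with h | h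
    · subst h; simp at h1
    · omega
  have hfr : Module.finrank (ZMod p) (LinearMap.ker ψ) = t - 2 := by omega
  have ecard : ((univ : Finset (Fin t → ZMod p)).filter
      fun x => dotp x y = 0 ∧ dotp x y' = 0).card = Nat.card (LinearMap.ker ψ) := by
    rw [show ((univ : Finset (Fin t → ZMod p)).filter
        fun x => dotp x y = 0 ∧ dotp x y' = 0).card
      = Nat.card {x : Fin t → ZMod p // dotp x y = 0 ∧ dotp x y' = 0} by
        rw [Nat.card_eq_fintype_card, Fintype.card_subtype]]
    refine Nat.card_congr ⟨fun x => ⟨⟨x.1, LinearMap.mem_ker.mpr x.2.1⟩,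
        LinearMap.mem_ker.mpr x.2.2⟩,
      fun s => ⟨s.1.1, ⟨LinearMap.mem_ker.mp s.1.2, LinearMap.mem_ker.mp s.2⟩⟩,
      fun x => rfl, fun s => rfl⟩
  have e3 : Nat.card (LinearMap.ker ψ) = p ^ (t - 2) := by
    haveI : Fintype (LinearMap.ker ψ) := Fintype.ofFinite _
    rw [Nat.card_eq_fintype_card, Module.card_eq_pow_finrank (K := ZMod p), ZMod.card, hfr]
  rw [ecard, e3, show p * p = p ^ 2 from (sq p).symm, ← pow_add]
  congr 1
  omega

end LinAlg2

section Moments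

open scoped Classical

variable {p t : ℕ} [Fact p.Prime]

noncomputable def nbr (x : Fin t → ZMod p) : Finset (Fin t → ZMod p) :=
  univ.filter (fun y => dotp x y = 0)

lemma inter_nbr_card (B : Finset (Fin t → ZMod p)) (x : Fin t → ZMod p) :
    (B ∩ nbr x).card = ∑ y ∈ B, if dotp x y = 0 then 1 else 0 := by
  rw [show B ∩ nbr x = B.filter (fun y => dotp x y = 0) by
    ext z; simp [nbr, and_comm]]
  rw [Finset.card_filter]

lemma sum_deg (B : Finset (Fin t → ZMod p)) (hB : ∀ y ∈ B, y ≠ 0) (ht : 1 ≤ t) :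
    (∑ x : Fin t → ZMod p, (B ∩ nbr x).card) * p = B.card * p ^ t := by
  simp_rw [inter_nbr_card]
  rw [Finset.sum_comm, Finset.sum_mul]
  rw [Finset.card_eq_sum_ones B, Finset.sum_mul]
  refine Finset.sum_congr rfl fun y hy => ?_
  rw [← Finset.card_filter]
  rw [card_ker_one y (hB y hy) ht, one_mul]

lemma sum_deg_sq (B : Finset (Fin t → ZMod p)) (hB : ∀ y ∈ B, y ≠ 0) (ht : 1 ≤ t) :
    (∑ x : Fin t → ZMod p, (B ∩ nbr x).card ^ 2) * (p * p)
      ≤ B.card ^ 2 * p ^ t + B.card * (p * p) * p ^ t := by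
  have expand : ∀ x : Fin t → ZMod p, (B ∩ nbr x).card ^ 2
      = ∑ z ∈ B ×ˢ B, (if dotp x z.1 = 0 ∧ dotp x z.2 = 0 then 1 else 0) := by
    intro x
    rw [sq, inter_nbr_card, Finset.sum_mul_sum, Finset.sum_product]
    refine Finset.sum_congr rfl fun a _ => Finset.sum_congr rfl fun b _ => ?_
    by_cases h1 : dotp x a = 0 <;> by_cases h2 : dotp x b = 0 <;> simp [h1, h2]
  simp_rw [expand]
  rw [Finset.sum_comm]
  have gdef : ∀ z : (Fin t → ZMod p) × (Fin t → ZMod p),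
      (∑ x : Fin t → ZMod p, if dotp x z.1 = 0 ∧ dotp x z.2 = 0 then 1 else 0)
      = ((univ : Finset (Fin t → ZMod p)).filter
          (fun x => dotp x z.1 = 0 ∧ dotp x z.2 = 0)).card := by
    intro z; rw [Finset.card_filter]
  simp_rw [gdef]
  set dep : (Fin t → ZMod p) × (Fin t → ZMod p) → Prop :=
    fun z => ∃ c : ZMod p, z.2 = c • z.1 with hdepdef
  rw [← Finset.sum_filter_add_sum_filter_not (B ×ˢ B) dep, add_mul]
  have bound1 : (∑ z ∈ (B ×ˢ B).filter dep,
      ((univ : Finset (Fin t → ZMod p)).filter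
        (fun x => dotp x z.1 = 0 ∧ dotp x z.2 = 0)).card) * (p * p)
      ≤ B.card * (p * p) * p ^ t := by
    have hdepcard : ((B ×ˢ B).filter dep).card ≤ B.card * p := by
      have hsub : (B ×ˢ B).filter dep ⊆
          B.biUnion (fun y => ({y} : Finset _) ×ˢ (univ : Finset (ZMod p)).image (fun c => c • y)) := by
        intro z hz
        rw [Finset.mem_filter, Finset.mem_product] at hz
        obtain ⟨⟨h1, h2⟩, c, hc⟩ := hz
        rw [Finset.mem_biUnion]
        exact ⟨z.1, h1, by
          rw [Finset.mem_product]
          exact ⟨by simp, Finset.mem_image.mpr ⟨c, Finset.mem_univ c, hc.symm⟩⟩⟩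
      refine (Finset.card_le_card hsub).trans ((Finset.card_biUnion_le).trans ?_)
      have hy : ∀ y ∈ B, (({y} : Finset (Fin t → ZMod p)) ×ˢ
          ((univ : Finset (ZMod p)).image (fun c => c • y))).card ≤ p := by
        intro y _
        rw [Finset.card_product, Finset.card_singleton, one_mul]
        exact (Finset.card_image_le).trans (by simp [ZMod.card])
      calc ∑ y ∈ B, (({y} : Finset (Fin t → ZMod p)) ×ˢ
            ((univ : Finset (ZMod p)).image (fun c => c • y))).card
          ≤ ∑ _y ∈ B, p := Finset.sum_le_sum hy
        _ = B.card * p := by rw [Finset.sum_const, smul_eq_mul]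
    have each : ∀ z ∈ (B ×ˢ B).filter dep,
        ((univ : Finset (Fin t → ZMod p)).filter
          (fun x => dotp x z.1 = 0 ∧ dotp x z.2 = 0)).card * (p * p) ≤ p ^ t * p := by
      intro z hz
      rw [Finset.mem_filter, Finset.mem_product] at hz
      have hsub : ((univ : Finset (Fin t → ZMod p)).filter
          (fun x => dotp x z.1 = 0 ∧ dotp x z.2 = 0)).card
          ≤ ((univ : Finset (Fin t → ZMod p)).filter (fun x => dotp x z.1 = 0)).card :=
        Finset.card_le_card (Finset.filter_subset_filter _ (fun x hx => hx) |>.trans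
          (by intro a ha; rw [Finset.mem_filter] at ha ⊢; exact ⟨ha.1, ha.2.1⟩))
      calc _ ≤ (((univ : Finset (Fin t → ZMod p)).filter (fun x => dotp x z.1 = 0)).card) * (p * p) := by
              exact Nat.mul_le_mul_right _ hsub
        _ = p ^ t * p := by
              rw [← mul_assoc, card_ker_one z.1 (hB z.1 hz.1.1) ht]
    calc (∑ z ∈ (B ×ˢ B).filter dep, _) * (p * p)
        = ∑ z ∈ (B ×ˢ B).filter dep,
            (((univ : Finset (Fin t → ZMod p)).filter
              (fun x => dotp x z.1 = 0 ∧ dotp x z.2 = 0)).card * (p * p)) := by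
          rw [Finset.sum_mul]
      _ ≤ ∑ z ∈ (B ×ˢ B).filter dep, p ^ t * p := Finset.sum_le_sum each
      _ = ((B ×ˢ B).filter dep).card * (p ^ t * p) := by rw [Finset.sum_const, smul_eq_mul]
      _ ≤ (B.card * p) * (p ^ t * p) := Nat.mul_le_mul_right _ hdepcard
      _ = B.card * (p * p) * p ^ t := by ring
  have bound2 : (∑ z ∈ (B ×ˢ B).filter (fun z => ¬ dep z),
      ((univ : Finset (Fin t → ZMod p)).filter
        (fun x => dotp x z.1 = 0 ∧ dotp x z.2 = 0)).card) * (p * p)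
      ≤ B.card ^ 2 * p ^ t := by
    have each : ∀ z ∈ (B ×ˢ B).filter (fun z => ¬ dep z),
        ((univ : Finset (Fin t → ZMod p)).filter
          (fun x => dotp x z.1 = 0 ∧ dotp x z.2 = 0)).card * (p * p) = p ^ t := by
      intro z hz
      rw [Finset.mem_filter, Finset.mem_product] at hz
      exact card_ker_two z.1 z.2 (hB z.1 hz.1.1) hz.2
    calc (∑ z ∈ (B ×ˢ B).filter (fun z => ¬ dep z), _) * (p * p)
        = ∑ z ∈ (B ×ˢ B).filter (fun z => ¬ dep z),
            (((univ : Finset (Fin t → ZMod p)).filter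
              (fun x => dotp x z.1 = 0 ∧ dotp x z.2 = 0)).card * (p * p)) := by
          rw [Finset.sum_mul]
      _ = ∑ z ∈ (B ×ˢ B).filter (fun z => ¬ dep z), p ^ t := Finset.sum_congr rfl each
      _ = ((B ×ˢ B).filter (fun z => ¬ dep z)).card * p ^ t := by
          rw [Finset.sum_const, smul_eq_mul]
      _ ≤ (B.card * B.card) * p ^ t := by
          refine Nat.mul_le_mul_right _ ?_
          refine (Finset.card_le_card (Finset.filter_subset _ _)).trans ?_
          rw [Finset.card_product]
      _ = B.card ^ 2 * p ^ t := by ring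
  exact Nat.add_le_add bound1 bound2 |>.trans_eq' (by ring) |>.trans_eq (by ring)

end Moments

section Variance

variable {p t : ℕ} [Fact p.Prime]

lemma cardV : Fintype.card (Fin t → ZMod p) = p ^ t := by
  rw [Fintype.card_fun, ZMod.card, Fintype.card_fin]

lemma variance_bound (B : Finset (Fin t → ZMod p)) (hB : ∀ y ∈ B, y ≠ 0) (ht : 1 ≤ t) :
    ∑ x : Fin t → ZMod p, ((B.card : ℝ)/p - ((B ∩ nbr x).card : ℝ))^2
      ≤ (B.card : ℝ) * (p : ℝ)^t := by
  have hp0 : (0:ℝ) < (p:ℝ) := by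
    exact_mod_cast (Fact.out : p.Prime).pos
  have hpne : (p:ℝ) ≠ 0 := ne_of_gt hp0
  have hS1 : (∑ x : Fin t → ZMod p, ((B ∩ nbr x).card : ℝ)) * p
      = (B.card : ℝ) * (p:ℝ)^t := by
    exact_mod_cast sum_deg B hB ht
  have hS2 : (∑ x : Fin t → ZMod p, ((B ∩ nbr x).card : ℝ)^2) * ((p:ℝ) * p)
      ≤ (B.card : ℝ)^2 * (p:ℝ)^t + (B.card : ℝ) * ((p:ℝ)*p) * (p:ℝ)^t := by
    exact_mod_cast sum_deg_sq B hB ht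
  have expand : ∑ x : Fin t → ZMod p, ((B.card : ℝ)/p - ((B ∩ nbr x).card : ℝ))^2
      = (p:ℝ)^t * ((B.card : ℝ)/p)^2
        - 2*((B.card : ℝ)/p) * (∑ x : Fin t → ZMod p, ((B ∩ nbr x).card : ℝ))
        + (∑ x : Fin t → ZMod p, ((B ∩ nbr x).card : ℝ)^2) := by
    calc ∑ x : Fin t → ZMod p, ((B.card : ℝ)/p - ((B ∩ nbr x).card : ℝ))^2
        = ∑ x : Fin t → ZMod p,
            (((B.card : ℝ)/p)^2 - 2*((B.card : ℝ)/p)*((B ∩ nbr x).card : ℝ)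
              + ((B ∩ nbr x).card : ℝ)^2) :=
          Finset.sum_congr rfl (fun x _ => by ring)
      _ = (∑ _x : Fin t → ZMod p, ((B.card : ℝ)/p)^2)
            - (∑ x : Fin t → ZMod p, 2*((B.card : ℝ)/p)*((B ∩ nbr x).card : ℝ))
            + (∑ x : Fin t → ZMod p, ((B ∩ nbr x).card : ℝ)^2) := by
          rw [Finset.sum_add_distrib, Finset.sum_sub_distrib]
      _ = (p:ℝ)^t * ((B.card : ℝ)/p)^2
            - 2*((B.card : ℝ)/p) * (∑ x : Fin t → ZMod p, ((B ∩ nbr x).card : ℝ))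
            + (∑ x : Fin t → ZMod p, ((B ∩ nbr x).card : ℝ)^2) := by
          rw [Finset.sum_const, nsmul_eq_mul, Finset.card_univ, Finset.mul_sum, cardV]
          push_cast
          ring
  have h1 : (∑ x : Fin t → ZMod p, ((B ∩ nbr x).card : ℝ))
      = (B.card : ℝ) * (p:ℝ)^t / p := (eq_div_iff hpne).mpr hS1
  have h2 : (∑ x : Fin t → ZMod p, ((B ∩ nbr x).card : ℝ)^2)
      ≤ ((B.card : ℝ)^2 * (p:ℝ)^t + (B.card : ℝ) * ((p:ℝ)*p) * (p:ℝ)^t) / ((p:ℝ)*p) :=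
    (le_div_iff₀ (by positivity)).mpr hS2
  have final : (p:ℝ)^t * ((B.card : ℝ)/p)^2
      - 2*((B.card : ℝ)/p) * ((B.card : ℝ) * (p:ℝ)^t / p)
      + ((B.card : ℝ)^2 * (p:ℝ)^t + (B.card : ℝ) * ((p:ℝ)*p) * (p:ℝ)^t) / ((p:ℝ)*p)
      = (B.card : ℝ) * (p:ℝ)^t := by
    field_simp
    ring
  rw [expand, h1]
  linarith [h2, final]

end Variance

section Supersat

variable {p t : ℕ} [Fact p.Prime]

lemma exists_good (A B : Finset (Fin t → ZMod p)) (hB : ∀ y ∈ B, y ≠ 0) (ht : 1 ≤ t)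
    (hbig : p ^ (t+4) < A.card * B.card) :
    ∃ x ∈ A, (B.card : ℝ) ≤ 2 * p * ((B ∩ nbr x).card : ℝ) := by
  have hp2 : 2 ≤ p := (Fact.out : p.Prime).two_le
  have hp0 : (0:ℝ) < (p:ℝ) := by positivity
  have hApos : 0 < A.card := by
    rcases Nat.eq_zero_or_pos A.card with h | h
    · rw [h] at hbig; simp at hbig
    · exact h
  have hBpos : 0 < B.card := by
    rcases Nat.eq_zero_or_pos B.card with h | h
    · rw [h] at hbig; simp at hbig
    · exact h
  by_contra hcon
  push_neg at hcon
  -- each x in A has small degree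
  have hsmall : ∀ x ∈ A, ((B ∩ nbr x).card : ℝ) < (B.card : ℝ) / (2*p) := by
    intro x hx
    have := hcon x hx
    rw [lt_div_iff₀ (by positivity)]
    linarith [this]
  -- lower bound the sum of (n/p - F x) over A
  have hterm : ∀ x ∈ A, (B.card : ℝ) / (2*p)
      ≤ (B.card : ℝ)/p - ((B ∩ nbr x).card : ℝ) := by
    intro x hx
    have h := hsmall x hx
    have : (B.card : ℝ)/p - (B.card : ℝ)/(2*p) = (B.card : ℝ)/(2*p) := by
      field_simp
      ring
    linarith [h, this]
  have hsum : (A.card : ℝ) * ((B.card : ℝ) / (2*p))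
      ≤ ∑ x ∈ A, ((B.card : ℝ)/p - ((B ∩ nbr x).card : ℝ)) := by
    calc (A.card : ℝ) * ((B.card : ℝ) / (2*p))
        = ∑ _x ∈ A, ((B.card : ℝ) / (2*p)) := by rw [Finset.sum_const, nsmul_eq_mul]
      _ ≤ _ := Finset.sum_le_sum hterm
  -- Cauchy-Schwarz
  have hcs : (∑ x ∈ A, ((B.card : ℝ)/p - ((B ∩ nbr x).card : ℝ)))^2
      ≤ (A.card : ℝ) * ∑ x ∈ A, ((B.card : ℝ)/p - ((B ∩ nbr x).card : ℝ))^2 := by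
    have := Finset.sum_mul_sq_le_sq_mul_sq A (fun _ => (1:ℝ))
      (fun x => (B.card : ℝ)/p - ((B ∩ nbr x).card : ℝ))
    simpa [Finset.sum_const, nsmul_eq_mul] using this
  have hsub : ∑ x ∈ A, ((B.card : ℝ)/p - ((B ∩ nbr x).card : ℝ))^2
      ≤ ∑ x : Fin t → ZMod p, ((B.card : ℝ)/p - ((B ∩ nbr x).card : ℝ))^2 :=
    Finset.sum_le_sum_of_subset_of_nonneg (Finset.subset_univ A)
      (fun x _ _ => sq_nonneg _)
  have hvar := variance_bound B hB ht
  -- combine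
  have hnonneg : (0:ℝ) ≤ (A.card : ℝ) * ((B.card : ℝ) / (2*p)) := by positivity
  have key : ((A.card : ℝ) * ((B.card : ℝ) / (2*p)))^2
      ≤ (A.card : ℝ) * ((B.card : ℝ) * (p:ℝ)^t) := by
    calc ((A.card : ℝ) * ((B.card : ℝ) / (2*p)))^2
        ≤ (∑ x ∈ A, ((B.card : ℝ)/p - ((B ∩ nbr x).card : ℝ)))^2 := by
          apply sq_le_sq' <;> nlinarith [hsum, hnonneg]
      _ ≤ (A.card : ℝ) * ∑ x ∈ A, ((B.card : ℝ)/p - ((B ∩ nbr x).card : ℝ))^2 := hcs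
      _ ≤ (A.card : ℝ) * ∑ x : Fin t → ZMod p, ((B.card : ℝ)/p - ((B ∩ nbr x).card : ℝ))^2 := by
          exact mul_le_mul_of_nonneg_left hsub (by positivity)
      _ ≤ (A.card : ℝ) * ((B.card : ℝ) * (p:ℝ)^t) :=
          mul_le_mul_of_nonneg_left hvar (by positivity)
  -- derive |A||B| ≤ 4 p^2 p^t
  have hApos' : (0:ℝ) < (A.card : ℝ) := by exact_mod_cast hApos
  have hBpos' : (0:ℝ) < (B.card : ℝ) := by exact_mod_cast hBpos
  have e : ((A.card : ℝ) * ((B.card : ℝ) / (2*p)))^2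
      = ((A.card : ℝ)*(B.card : ℝ))^2 / (4*(p:ℝ)^2) := by
    field_simp
    ring
  have h4pos : (0:ℝ) < 4*(p:ℝ)^2 := by positivity
  have key2 : ((A.card : ℝ)*(B.card : ℝ))^2
      ≤ ((A.card : ℝ)*(B.card : ℝ)) * (4*(p:ℝ)^2*(p:ℝ)^t) := by
    rw [e] at key
    have := (div_le_iff₀ h4pos).mp key
    calc ((A.card : ℝ)*(B.card : ℝ))^2 ≤ (A.card : ℝ) * ((B.card : ℝ) * (p:ℝ)^t) * (4*(p:ℝ)^2) := this
      _ = ((A.card : ℝ)*(B.card : ℝ)) * (4*(p:ℝ)^2*(p:ℝ)^t) := by ring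
  have hABpos : (0:ℝ) < (A.card : ℝ)*(B.card : ℝ) := by positivity
  have hfin : (A.card : ℝ) * (B.card : ℝ) ≤ 4 * (p:ℝ)^2 * (p:ℝ)^t := by
    have := (mul_le_mul_iff_right₀ hABpos).mp
      (by calc ((A.card : ℝ)*(B.card : ℝ)) * ((A.card : ℝ)*(B.card : ℝ))
            = ((A.card : ℝ)*(B.card : ℝ))^2 := by ring
        _ ≤ ((A.card : ℝ)*(B.card : ℝ)) * (4*(p:ℝ)^2*(p:ℝ)^t) := key2)
    exact this
  have hlt : ((p:ℕ)^(t+4) : ℝ) < (A.card : ℝ) * (B.card : ℝ) := by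
    exact_mod_cast hbig
  have hge : 4 * (p:ℝ)^2 * (p:ℝ)^t ≤ ((p:ℕ)^(t+4) : ℝ) := by
    push_cast
    have h4 : (4:ℝ) ≤ (p:ℝ)^2 := by nlinarith [show (2:ℝ) ≤ (p:ℝ) by exact_mod_cast hp2]
    have hppos : (0:ℝ) ≤ (p:ℝ)^2*(p:ℝ)^t := by positivity
    calc 4 * (p:ℝ)^2 * (p:ℝ)^t = 4 * ((p:ℝ)^2 * (p:ℝ)^t) := by ring
      _ ≤ (p:ℝ)^2 * ((p:ℝ)^2 * (p:ℝ)^t) := mul_le_mul_of_nonneg_right h4 hppos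
      _ = (p:ℝ)^(t+4) := by ring
  linarith [hlt, hge, hfin]

end Supersat

section Algo

variable {p t : ℕ} [Fact p.Prime]

noncomputable def pivot (A B : Finset (Fin t → ZMod p)) : Fin t → ZMod p :=
  if h : A.Nonempty then
    (Finset.exists_max_image A (fun x => (B ∩ nbr x).card) h).choose
  else 0

lemma pivot_mem {A B : Finset (Fin t → ZMod p)} (h : A.Nonempty) : pivot A B ∈ A := by
  rw [pivot, dif_pos h]
  exact (Finset.exists_max_image A (fun x => (B ∩ nbr x).card) h).choose_spec.1

lemma pivot_max {A B : Finset (Fin t → ZMod p)} (h : A.Nonempty) :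
    ∀ x ∈ A, (B ∩ nbr x).card ≤ (B ∩ nbr (pivot A B)).card := by
  rw [pivot, dif_pos h]
  exact (Finset.exists_max_image A (fun x => (B ∩ nbr x).card) h).choose_spec.2

lemma not_stop_pos {A B : Finset (Fin t → ZMod p)}
    (h : ¬ A.card * B.card ≤ p ^ (t+4)) : 0 < A.card ∧ 0 < B.card := by
  constructor
  · rcases Nat.eq_zero_or_pos A.card with h0 | h0
    · exact absurd (by rw [h0]; simp) h
    · exact h0
  · rcases Nat.eq_zero_or_pos B.card with h0 | h0
    · exact absurd (by rw [h0]; simp) h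
    · exact h0

noncomputable def runC (D : Finset (Fin t → ZMod p)) :
    Finset (Fin t → ZMod p) → Finset (Fin t → ZMod p) →
      Finset (Fin t → ZMod p) × Finset (Fin t → ZMod p) := fun A B =>
  if h : A.card * B.card ≤ p ^ (t+4) then (A, B)
  else if pivot A B ∈ D then runC D (A.erase (pivot A B)) (B \ nbr (pivot A B))
  else runC D (A.erase (pivot A B)) B
termination_by A => A.card
decreasing_by
  all_goals exact Finset.card_erase_lt_of_mem (pivot_mem (Finset.card_pos.mp (not_stop_pos h).1))

noncomputable def certC (C : Finset (Fin t → ZMod p)) :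
    Finset (Fin t → ZMod p) → Finset (Fin t → ZMod p) → Finset (Fin t → ZMod p) := fun A B =>
  if h : A.card * B.card ≤ p ^ (t+4) then ∅
  else if pivot A B ∈ C then
    insert (pivot A B) (certC C (A.erase (pivot A B)) (B \ nbr (pivot A B)))
  else certC C (A.erase (pivot A B)) B
termination_by A => A.card
decreasing_by
  all_goals exact Finset.card_erase_lt_of_mem (pivot_mem (Finset.card_pos.mp (not_stop_pos h).1))

lemma erase_card_le {A B : Finset (Fin t → ZMod p)} (h : ¬ A.card * B.card ≤ p ^ (t+4))
    {n : ℕ} (hA : A.card ≤ n + 1) : (A.erase (pivot A B)).card ≤ n := by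
  have := (not_stop_pos h).1
  rw [Finset.card_erase_of_mem (pivot_mem (Finset.card_pos.mp this))]
  omega

lemma run_stop (D : Finset (Fin t → ZMod p)) :
    ∀ (n : ℕ) (A B : Finset (Fin t → ZMod p)), A.card ≤ n →
      (runC D A B).1.card * (runC D A B).2.card ≤ p ^ (t+4) := by
  intro n
  induction n with
  | zero =>
    intro A B hA
    have h0 : A.card = 0 := Nat.le_zero.mp hA
    rw [runC, dif_pos (by rw [h0]; simp)]
    simp [h0]
  | succ n ih =>
    intro A B hA
    rw [runC]
    split_ifs with h1 h2
    · exact h1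
    · exact ih _ _ (erase_card_le h1 hA)
    · exact ih _ _ (erase_card_le h1 hA)

lemma cert_subset_A (C : Finset (Fin t → ZMod p)) :
    ∀ (n : ℕ) (A B : Finset (Fin t → ZMod p)), A.card ≤ n → certC C A B ⊆ A := by
  intro n
  induction n with
  | zero =>
    intro A B hA
    have h0 : A.card = 0 := Nat.le_zero.mp hA
    rw [certC, dif_pos (by rw [h0]; simp)]
    exact Finset.empty_subset _
  | succ n ih =>
    intro A B hA
    rw [certC]
    split_ifs with h1 h2
    · exact Finset.empty_subset _
    · refine Finset.insert_subset (pivot_mem (Finset.card_pos.mp (not_stop_pos h1).1)) ?_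
      exact (ih _ _ (erase_card_le h1 hA)).trans (Finset.erase_subset _ _)
    · exact (ih _ _ (erase_card_le h1 hA)).trans (Finset.erase_subset _ _)

lemma cert_subset_C (C : Finset (Fin t → ZMod p)) :
    ∀ (n : ℕ) (A B : Finset (Fin t → ZMod p)), A.card ≤ n → certC C A B ⊆ C := by
  intro n
  induction n with
  | zero =>
    intro A B hA
    have h0 : A.card = 0 := Nat.le_zero.mp hA
    rw [certC, dif_pos (by rw [h0]; simp)]
    exact Finset.empty_subset _
  | succ n ih =>
    intro A B hA
    rw [certC]
    split_ifs with h1 h2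
    · exact Finset.empty_subset _
    · exact Finset.insert_subset h2 (ih _ _ (erase_card_le h1 hA))
    · exact ih _ _ (erase_card_le h1 hA)

lemma run_congr :
    ∀ (n : ℕ) (A B D D' : Finset (Fin t → ZMod p)), A.card ≤ n → D ∩ A = D' ∩ A →
      runC D A B = runC D' A B := by
  intro n
  induction n with
  | zero =>
    intro A B D D' hA _
    have h0 : A.card = 0 := Nat.le_zero.mp hA
    conv_lhs => rw [runC]
    conv_rhs => rw [runC]
    rw [dif_pos (by rw [h0]; simp), dif_pos (by rw [h0]; simp)]
  | succ n ih =>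
    intro A B D D' hA hDD
    conv_lhs => rw [runC]
    conv_rhs => rw [runC]
    by_cases h1 : A.card * B.card ≤ p ^ (t+4)
    · rw [dif_pos h1, dif_pos h1]
    · rw [dif_neg h1, dif_neg h1]
      have hmem : pivot A B ∈ A := pivot_mem (Finset.card_pos.mp (not_stop_pos h1).1)
      have hinter : D ∩ (A.erase (pivot A B)) = D' ∩ (A.erase (pivot A B)) := by
        ext z
        simp only [Finset.mem_inter, Finset.mem_erase]
        have hz := Finset.ext_iff.mp hDD z
        simp only [Finset.mem_inter] at hz
        constructor
        · rintro ⟨h, h2, h3⟩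
          exact ⟨(hz.mp ⟨h, h3⟩).1, h2, h3⟩
        · rintro ⟨h, h2, h3⟩
          exact ⟨(hz.mpr ⟨h, h3⟩).1, h2, h3⟩
      have hDiff := Finset.ext_iff.mp hDD (pivot A B)
      simp only [Finset.mem_inter] at hDiff
      by_cases hd : pivot A B ∈ D
      · rw [if_pos hd, if_pos (hDiff.mp ⟨hd, hmem⟩).1]
        exact ih _ _ _ _ (erase_card_le h1 hA) hinter
      · rw [if_neg hd, if_neg (fun hd' => hd (hDiff.mpr ⟨hd', hmem⟩).1)]
        exact ih _ _ _ _ (erase_card_le h1 hA) hinter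

lemma run_cert (C : Finset (Fin t → ZMod p)) :
    ∀ (n : ℕ) (A B : Finset (Fin t → ZMod p)), A.card ≤ n →
      runC C A B = runC (certC C A B) A B := by
  intro n
  induction n with
  | zero =>
    intro A B hA
    have h0 : A.card = 0 := Nat.le_zero.mp hA
    conv_lhs => rw [runC]
    conv_rhs => rw [runC]
    rw [dif_pos (by rw [h0]; simp), dif_pos (by rw [h0]; simp)]
  | succ n ih =>
    intro A B hA
    conv_lhs => rw [runC]
    conv_rhs => rw [runC]
    rw [certC]
    by_cases h1 : A.card * B.card ≤ p ^ (t+4)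
    · rw [dif_pos h1, dif_pos h1]
    · rw [dif_neg h1, dif_neg h1]
      by_cases h2 : pivot A B ∈ C
      · rw [if_pos h2, if_pos (by rw [dif_neg h1, if_pos h2]; exact Finset.mem_insert_self _ _)]
        rw [ih _ _ (erase_card_le h1 hA)]
        refine run_congr _ _ _ _ _ (le_refl ((A.erase (pivot A B)).card)) ?_
        rw [dif_neg h1, if_pos h2]
        ext z
        simp only [Finset.mem_inter, Finset.mem_insert, Finset.mem_erase]
        constructor
        · rintro ⟨hz, hz2, hz3⟩
          exact ⟨Or.inr hz, hz2, hz3⟩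
        · rintro ⟨hz | hz, hz2, hz3⟩
          · exact absurd hz hz2
          · exact ⟨hz, hz2, hz3⟩
      · have hnotin : pivot A B ∉ certC C (A.erase (pivot A B)) B := by
          intro hmem
          have := cert_subset_A C _ (A.erase (pivot A B)) B (le_refl _) hmem
          exact (Finset.mem_erase.mp this).1 rfl
        rw [if_neg h2, if_neg (by rw [dif_neg h1, if_neg h2]; exact hnotin)]
        rw [ih _ _ (erase_card_le h1 hA)]
        rw [dif_neg h1, if_neg h2]

end Algo

section Invariants

variable {p t : ℕ} [Fact p.Prime]

lemma run_left (C : Finset (Fin t → ZMod p)) :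
    ∀ (n : ℕ) (A B : Finset (Fin t → ZMod p)), A.card ≤ n →
      C ∩ A ⊆ (runC C A B).1 ∪ certC C A B := by
  intro n
  induction n with
  | zero =>
    intro A B hA
    have h0 : A.card = 0 := Nat.le_zero.mp hA
    rw [runC, certC, dif_pos (by rw [h0]; simp), dif_pos (by rw [h0]; simp)]
    exact (Finset.inter_subset_right).trans (Finset.subset_union_left)
  | succ n ih =>
    intro A B hA
    rw [runC, certC]
    split_ifs with h1 h2
    · exact (Finset.inter_subset_right).trans (Finset.subset_union_left)
    · intro z hz
      rw [Finset.mem_inter] at hz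
      by_cases hzp : z = pivot A B
      · subst hzp
        exact Finset.mem_union_right _ (Finset.mem_insert_self _ _)
      · have hz' : z ∈ C ∩ (A.erase (pivot A B)) :=
          Finset.mem_inter.mpr ⟨hz.1, Finset.mem_erase.mpr ⟨hzp, hz.2⟩⟩
        have := ih (A.erase (pivot A B)) (B \ nbr (pivot A B)) (erase_card_le h1 hA) hz'
        rw [Finset.mem_union] at this
        rcases this with h | h
        · exact Finset.mem_union_left _ h
        · exact Finset.mem_union_right _ (Finset.mem_insert_of_mem h)
    · intro z hz
      rw [Finset.mem_inter] at hz
      have hzp : z ≠ pivot A B := fun h => h2 (h ▸ hz.1)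
      have hz' : z ∈ C ∩ (A.erase (pivot A B)) :=
        Finset.mem_inter.mpr ⟨hz.1, Finset.mem_erase.mpr ⟨hzp, hz.2⟩⟩
      exact ih (A.erase (pivot A B)) B (erase_card_le h1 hA) hz'

lemma run_right (C C2 : Finset (Fin t → ZMod p))
    (hcross : ∀ x ∈ C, ∀ y ∈ C2, dotp x y ≠ 0) :
    ∀ (n : ℕ) (A B : Finset (Fin t → ZMod p)), A.card ≤ n → C2 ⊆ B →
      C2 ⊆ (runC C A B).2 := by
  intro n
  induction n with
  | zero =>
    intro A B hA hC2
    have h0 : A.card = 0 := Nat.le_zero.mp hA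
    rw [runC, dif_pos (by rw [h0]; simp)]
    exact hC2
  | succ n ih =>
    intro A B hA hC2
    rw [runC]
    split_ifs with h1 h2
    · exact hC2
    · refine ih _ _ (erase_card_le h1 hA) ?_
      intro y hy
      rw [Finset.mem_sdiff]
      refine ⟨hC2 hy, ?_⟩
      rw [nbr, Finset.mem_filter]
      push_neg
      intro _
      exact hcross _ h2 y hy
    · exact ih _ _ (erase_card_le h1 hA) hC2

lemma shrink_step {A B : Finset (Fin t → ZMod p)} (ht : 1 ≤ t)
    (hB0 : ∀ y ∈ B, y ≠ 0) (h1 : ¬ A.card * B.card ≤ p ^ (t+4)) :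
    ((B \ nbr (pivot A B)).card : ℝ) ≤ (1 - 1/(2*p)) * B.card := by
  have hp0 : (0:ℝ) < (p:ℝ) := by
    exact_mod_cast (Fact.out : p.Prime).pos
  obtain ⟨x, hx, hxg⟩ := exists_good A B hB0 ht (not_le.mp h1)
  have hmax : ((B ∩ nbr x).card : ℝ) ≤ ((B ∩ nbr (pivot A B)).card : ℝ) := by
    exact_mod_cast pivot_max (Finset.card_pos.mp (not_stop_pos h1).1) x hx
  have hlow : (B.card : ℝ) ≤ 2*p * ((B ∩ nbr (pivot A B)).card : ℝ) := by
    refine hxg.trans ?_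
    exact mul_le_mul_of_nonneg_left hmax (by positivity)
  have hcards : ((B \ nbr (pivot A B)).card : ℝ) + ((B ∩ nbr (pivot A B)).card : ℝ)
      = (B.card : ℝ) := by
    exact_mod_cast Finset.card_sdiff_add_card_inter B (nbr (pivot A B))
  have hinter : (B.card : ℝ)/(2*p) ≤ ((B ∩ nbr (pivot A B)).card : ℝ) := by
    rw [div_le_iff₀ (by positivity)]
    calc (B.card : ℝ) ≤ 2*p * ((B ∩ nbr (pivot A B)).card : ℝ) := hlow
      _ = ((B ∩ nbr (pivot A B)).card : ℝ) * (2*p) := by ring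
  have : (1 - 1/(2*p)) * (B.card : ℝ) = (B.card : ℝ) - (B.card : ℝ)/(2*p) := by
    field_simp
  linarith [hcards, hinter, this]

lemma theta_bounds {p : ℕ} [Fact p.Prime] : (0:ℝ) < 1/(2*(p:ℝ)) ∧ (1:ℝ)/2 ≤ 1 - 1/(2*(p:ℝ)) := by
  have hp2 : 2 ≤ p := (Fact.out : p.Prime).two_le
  have hp2' : (2:ℝ) ≤ (p:ℝ) := by exact_mod_cast hp2
  have hp0 : (0:ℝ) < (p:ℝ) := by linarith
  constructor
  · positivity
  · have h4 : (4:ℝ) ≤ 2*(p:ℝ) := by linarith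
    have : 1/(2*(p:ℝ)) ≤ 1/4 := by
      apply div_le_div_of_nonneg_left (by norm_num) (by norm_num) h4
    linarith

lemma cert_pos (C : Finset (Fin t → ZMod p)) (ht : 1 ≤ t) :
    ∀ (n : ℕ) (A B : Finset (Fin t → ZMod p)), A.card ≤ n → (∀ y ∈ B, y ≠ 0) →
      certC C A B ≠ ∅ →
      1 - 1/(2*(p:ℝ)) ≤ (1 - 1/(2*(p:ℝ)))^((certC C A B).card) * B.card := by
  have hθ0 : (0:ℝ) ≤ 1 - 1/(2*(p:ℝ)) := by linarith [theta_bounds (p := p).2]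
  intro n
  induction n with
  | zero =>
    intro A B hA hB0 hne
    exfalso
    have h0 : A.card = 0 := Nat.le_zero.mp hA
    rw [certC, dif_pos (by rw [h0]; simp)] at hne
    exact hne rfl
  | succ n ih =>
    intro A B hA hB0 hne
    rw [certC]
    split_ifs with h1 h2
    · exact absurd (by rw [certC, dif_pos h1]) hne
    · -- pivot ∈ C
      have hxnotin : pivot A B ∉ certC C (A.erase (pivot A B)) (B \ nbr (pivot A B)) := by
        intro hmem
        have := cert_subset_A C _ (A.erase (pivot A B)) (B \ nbr (pivot A B)) (le_refl _) hmem
        exact (Finset.mem_erase.mp this).1 rfl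
      rw [Finset.card_insert_of_notMem hxnotin, pow_succ]
      have hshrink := shrink_step ht hB0 h1
      have hBpos : (1:ℝ) ≤ (B.card : ℝ) := by
        exact_mod_cast (not_stop_pos h1).2
      by_cases hc : certC C (A.erase (pivot A B)) (B \ nbr (pivot A B)) = ∅
      · rw [hc]
        simp only [Finset.card_empty, pow_zero, one_mul]
        nlinarith [hθ0, hBpos]
      · have hIH := ih (A.erase (pivot A B)) (B \ nbr (pivot A B)) (erase_card_le h1 hA)
          (fun y hy => hB0 y (Finset.mem_sdiff.mp hy).1) hc
        set m' := (certC C (A.erase (pivot A B)) (B \ nbr (pivot A B))).card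
        have hpow : (0:ℝ) ≤ (1 - 1/(2*(p:ℝ)))^m' := pow_nonneg hθ0 m'
        calc (1:ℝ) - 1/(2*(p:ℝ))
            ≤ (1 - 1/(2*(p:ℝ)))^m' * ((B \ nbr (pivot A B)).card : ℝ) := hIH
          _ ≤ (1 - 1/(2*(p:ℝ)))^m' * ((1 - 1/(2*(p:ℝ))) * (B.card : ℝ)) :=
              mul_le_mul_of_nonneg_left hshrink hpow
          _ = (1 - 1/(2*(p:ℝ)))^m' * (1 - 1/(2*(p:ℝ))) * (B.card : ℝ) := by ring
    · -- pivot ∉ C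
      refine ih (A.erase (pivot A B)) B (erase_card_le h1 hA) hB0 ?_
      rw [certC, dif_neg h1, if_neg h2] at hne
      exact hne

lemma cert_card_le (C : Finset (Fin t → ZMod p)) (ht : 1 ≤ t)
    (A B : Finset (Fin t → ZMod p)) (hB0 : ∀ y ∈ B, y ≠ 0) :
    (certC C A B).card ≤ 4 * p^2 * t := by
  by_cases hc : certC C A B = ∅
  · rw [hc]; simp
  · have hp2 : 2 ≤ p := (Fact.out : p.Prime).two_le
    have hp2' : (2:ℝ) ≤ (p:ℝ) := by exact_mod_cast hp2
    have hp0 : (0:ℝ) < (p:ℝ) := by linarith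
    set θ : ℝ := 1/(2*(p:ℝ)) with hθdef
    have hθpos : 0 < θ := (theta_bounds (p := p)).1
    have hθhalf : (1:ℝ)/2 ≤ 1 - θ := (theta_bounds (p := p)).2
    have hθ0 : (0:ℝ) ≤ 1 - θ := by linarith
    set m := (certC C A B).card with hmdef
    have h1 := cert_pos C ht A.card A B (le_refl _) hB0 hc
    have hBle : (B.card : ℝ) ≤ (p:ℝ)^t := by
      have : B.card ≤ p^t := by
        calc B.card ≤ Fintype.card (Fin t → ZMod p) := Finset.card_le_univ B
          _ = p^t := cardV
      exact_mod_cast this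
    have hBpos : (0:ℝ) ≤ (B.card : ℝ) := by positivity
    set X : ℝ := θ * (m:ℝ) with hXdef
    have hexp : (1 - θ)^m ≤ Real.exp (-X) := by
      have hb : 1 - θ ≤ Real.exp (-θ) := by linarith [Real.add_one_le_exp (-θ)]
      calc (1 - θ)^m ≤ (Real.exp (-θ))^m := pow_le_pow_left₀ hθ0 hb m
        _ = Real.exp (-X) := by
            rw [← Real.exp_nat_mul]
            congr 1
            rw [hXdef]
            ring
    have h2 : (1:ℝ)/2 ≤ Real.exp (-X) * (p:ℝ)^t := by
      calc (1:ℝ)/2 ≤ 1 - θ := hθhalf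
        _ ≤ (1 - θ)^m * B.card := h1
        _ ≤ Real.exp (-X) * (p:ℝ)^t := mul_le_mul hexp hBle hBpos (Real.exp_pos _).le
    have h3 : Real.exp X ≤ 2 * (p:ℝ)^t := by
      have hmul := mul_le_mul_of_nonneg_left h2 (Real.exp_pos X).le
      have hid : Real.exp X * (Real.exp (-X) * (p:ℝ)^t) = (p:ℝ)^t := by
        rw [← mul_assoc, ← Real.exp_add]
        simp
      rw [hid] at hmul
      linarith [hmul]
    have h4 : X ≤ Real.log 2 + t * Real.log p := by
      have hpos : (0:ℝ) < 2 * (p:ℝ)^t := by positivity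
      have := (Real.le_log_iff_exp_le hpos).mpr h3
      calc X ≤ Real.log (2 * (p:ℝ)^t) := this
        _ = Real.log 2 + Real.log ((p:ℝ)^t) := by
            rw [Real.log_mul (by norm_num) (by positivity)]
        _ = Real.log 2 + t * Real.log p := by rw [Real.log_pow]
    have hlog2 : Real.log 2 ≤ 1 := by
      have := Real.log_le_sub_one_of_pos (by norm_num : (0:ℝ) < 2)
      linarith
    have hlogp : Real.log p ≤ (p:ℝ) := by
      have := Real.log_le_sub_one_of_pos hp0
      linarith
    have htp : (1:ℝ) ≤ (t:ℝ) * (p:ℝ) := by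
      have ht' : (1:ℝ) ≤ (t:ℝ) := by exact_mod_cast ht
      nlinarith [ht', hp2']
    have h5 : (m:ℝ) ≤ 4 * (p:ℝ)^2 * t := by
      have hm : (m:ℝ) = X * (2*(p:ℝ)) := by
        rw [hXdef, hθdef]
        field_simp
      have ht0 : (0:ℝ) ≤ (t:ℝ) := by positivity
      calc (m:ℝ) = X * (2*(p:ℝ)) := hm
        _ ≤ (Real.log 2 + t * Real.log p) * (2*(p:ℝ)) := by
            refine mul_le_mul_of_nonneg_right h4 (by positivity)
        _ ≤ (1 + t * p) * (2*(p:ℝ)) := by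
            refine mul_le_mul_of_nonneg_right ?_ (by positivity)
            have : (t:ℝ) * Real.log p ≤ t * p := by
              refine mul_le_mul_of_nonneg_left hlogp ht0
            linarith
        _ ≤ (2 * (t * p)) * (2*(p:ℝ)) := by
            refine mul_le_mul_of_nonneg_right (by linarith [htp]) (by positivity)
        _ = 4 * (p:ℝ)^2 * t := by ring
    exact_mod_cast h5

end Invariants

section Count

lemma subsets_card_le {α : Type*} [DecidableEq α] (S : Finset α) (m : ℕ) :
    ((S.powerset).filter (fun R => R.card ≤ m)).card ≤ (m+1) * (S.card + 1)^m := by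
  have hsub : (S.powerset).filter (fun R => R.card ≤ m)
      ⊆ (Finset.range (m+1)).biUnion (fun j => S.powersetCard j) := by
    intro R hR
    rw [Finset.mem_filter, Finset.mem_powerset] at hR
    rw [Finset.mem_biUnion]
    exact ⟨R.card, Finset.mem_range.mpr (Nat.lt_succ_of_le hR.2),
      Finset.mem_powersetCard.mpr ⟨hR.1, rfl⟩⟩
  refine (Finset.card_le_card hsub).trans (Finset.card_biUnion_le.trans ?_)
  have hterm : ∀ j ∈ Finset.range (m+1), (S.powersetCard j).card ≤ (S.card + 1)^m := by
    intro j hj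
    rw [Finset.card_powersetCard]
    calc S.card.choose j ≤ S.card ^ j := Nat.choose_le_pow _ _
      _ ≤ (S.card + 1) ^ j := Nat.pow_le_pow_left (Nat.le_succ _) _
      _ ≤ (S.card + 1) ^ m := Nat.pow_le_pow_right (Nat.succ_pos _) (Nat.lt_succ_iff.mp
            (Finset.mem_range.mp hj))
  calc ∑ j ∈ Finset.range (m+1), (S.powersetCard j).card
      ≤ ∑ _j ∈ Finset.range (m+1), (S.card + 1)^m := Finset.sum_le_sum hterm
    _ = (m+1) * (S.card + 1)^m := by rw [Finset.sum_const, smul_eq_mul, Finset.card_range]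

end Count

/-- For every prime `p` there is a constant `c = c(p)` such that for all
positive integers `t` and `k`, the number of pairs `(C₁, C₂)` of subsets of
`F_p^t \ {0}` with `|C₁| ≤ k`, `|C₂| ≤ k` and `⟪v₁,v₂⟫ ≠ 0` for all `v₁ ∈ C₁`,
`v₂ ∈ C₂`, is at most `2^(c(t²+k)) · p^(tk)`. -/
theorem stmt_9 (p : ℕ) (hp : p.Prime) :
    ∃ c : ℝ, ∀ t k : ℕ, 1 ≤ t → 1 ≤ k →
      (Nat.card {C : Finset (Fin t → ZMod p) × Finset (Fin t → ZMod p) //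
          (∀ v ∈ C.1, v ≠ 0) ∧ (∀ v ∈ C.2, v ≠ 0) ∧
          C.1.card ≤ k ∧ C.2.card ≤ k ∧
          ∀ v₁ ∈ C.1, ∀ v₂ ∈ C.2, ∑ i, v₁ i * v₂ i ≠ 0} : ℝ) ≤
        2 ^ (c * ((t : ℝ) ^ 2 + k)) * (p : ℝ) ^ (t * k) := by
  haveI : Fact p.Prime := ⟨hp⟩
  refine ⟨((12 * p^3 : ℕ) : ℝ), ?_⟩
  intro t k ht hk
  classical
  set V := Fin t → ZMod p with hV
  set Q : Finset V × Finset V → Prop := fun C =>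
    (∀ v ∈ C.1, v ≠ 0) ∧ (∀ v ∈ C.2, v ≠ 0) ∧
      C.1.card ≤ k ∧ C.2.card ≤ k ∧
      ∀ v₁ ∈ C.1, ∀ v₂ ∈ C.2, ∑ i, v₁ i * v₂ i ≠ 0 with hQ
  have hcard : Nat.card {C : Finset V × Finset V // Q C}
      = ((univ : Finset (Finset V × Finset V)).filter Q).card := by
    rw [Nat.card_eq_fintype_card, Fintype.card_subtype]
  -- the initial state
  set A₀ : Finset V := (univ : Finset V).erase 0 with hA₀
  have hA₀ne : ∀ y ∈ A₀, y ≠ 0 := fun y hy => (Finset.mem_erase.mp hy).1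
  set s : ℕ := 4 * p^2 * t with hs
  set ℱ : Finset (Finset V) := (univ : Finset (Finset V)).filter (fun F => F.card ≤ s) with hℱ
  set 𝒯 : Finset (Finset V × Finset V × Finset V) :=
    ℱ.biUnion (fun F =>
      ((((runC F A₀ A₀).1.powerset.filter (fun R => R.card ≤ k)) ×ˢ
        ((runC F A₀ A₀).2.powerset.filter (fun R => R.card ≤ k))).image
          (fun pr => (F, pr.1, pr.2)))) with h𝒯
  -- the encoding map is injective into 𝒯
  have hinj : ((univ : Finset (Finset V × Finset V)).filter Q).card ≤ 𝒯.card := by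
    refine Finset.card_le_card_of_injOn
      (fun C => (certC C.1 A₀ A₀, C.1 \ certC C.1 A₀ A₀, C.2)) ?_ ?_
    · -- maps to 𝒯
      intro C hC
      rw [Finset.mem_coe, Finset.mem_filter] at hC
      obtain ⟨-, h1, h2, h3, h4, h5⟩ := hC
      have hC1sub : C.1 ⊆ A₀ := fun v hv => Finset.mem_erase.mpr ⟨h1 v hv, Finset.mem_univ v⟩
      have hC2sub : C.2 ⊆ A₀ := fun v hv => Finset.mem_erase.mpr ⟨h2 v hv, Finset.mem_univ v⟩
      set F := certC C.1 A₀ A₀ with hF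
      have hFcard : F.card ≤ s := cert_card_le C.1 ht A₀ A₀ hA₀ne
      have hrun : runC C.1 A₀ A₀ = runC F A₀ A₀ := run_cert C.1 A₀.card A₀ A₀ le_rfl
      have hleft : C.1 \ F ⊆ (runC F A₀ A₀).1 := by
        intro z hz
        rw [Finset.mem_sdiff] at hz
        have hz1 : z ∈ C.1 ∩ A₀ := Finset.mem_inter.mpr ⟨hz.1, hC1sub hz.1⟩
        have := run_left C.1 A₀.card A₀ A₀ le_rfl hz1
        rw [Finset.mem_union] at this
        rcases this with h | h
        · rw [← hrun]; exact h
        · exact absurd h hz.2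
      have hright : C.2 ⊆ (runC F A₀ A₀).2 := by
        rw [← hrun]
        exact run_right C.1 C.2 (fun x hx y hy => h5 x hx y hy) A₀.card A₀ A₀ le_rfl hC2sub
      rw [Finset.mem_coe, h𝒯, Finset.mem_biUnion]
      refine ⟨F, by rw [hℱ, Finset.mem_filter]; exact ⟨Finset.mem_univ _, hFcard⟩, ?_⟩
      rw [Finset.mem_image]
      refine ⟨(C.1 \ F, C.2), ?_, rfl⟩
      rw [Finset.mem_product]
      constructor
      · rw [Finset.mem_filter, Finset.mem_powerset]
        exact ⟨hleft, (Finset.card_le_card (Finset.sdiff_subset)).trans h3⟩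
      · rw [Finset.mem_filter, Finset.mem_powerset]
        exact ⟨hright, h4⟩
    · -- injective
      intro C hC C' hC' heq
      simp only [Prod.mk.injEq] at heq
      obtain ⟨e1, e2, e3⟩ := heq
      have hcert1 : certC C.1 A₀ A₀ ⊆ C.1 := cert_subset_C C.1 A₀.card A₀ A₀ le_rfl
      have hcert2 : certC C'.1 A₀ A₀ ⊆ C'.1 := cert_subset_C C'.1 A₀.card A₀ A₀ le_rfl
      have hC1 : C.1 = C'.1 := by
        calc C.1 = certC C.1 A₀ A₀ ∪ (C.1 \ certC C.1 A₀ A₀) :=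
              (Finset.union_sdiff_of_subset hcert1).symm
          _ = certC C'.1 A₀ A₀ ∪ (C'.1 \ certC C'.1 A₀ A₀) := by rw [e2, e1]
          _ = C'.1 := Finset.union_sdiff_of_subset hcert2
      exact Prod.ext hC1 e3
  -- bound the cardinality of 𝒯
  have hppos : 0 < p := hp.pos
  have hp2 : 2 ≤ p := hp.two_le
  have hperF : ∀ F ∈ ℱ,
      ((((runC F A₀ A₀).1.powerset.filter (fun R => R.card ≤ k)) ×ˢ
        ((runC F A₀ A₀).2.powerset.filter (fun R => R.card ≤ k))).image
          (fun pr => (F, pr.1, pr.2))).card ≤ (k+1)^2 * (4 * p^(t+4))^k := by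
    intro F _
    refine Finset.card_image_le.trans ?_
    rw [Finset.card_product]
    set a := (runC F A₀ A₀).1.card with ha
    set b := (runC F A₀ A₀).2.card with hb
    have hab : a * b ≤ p^(t+4) := run_stop F A₀.card A₀ A₀ le_rfl
    have haT : a ≤ p^t := by
      calc a ≤ Fintype.card V := Finset.card_le_univ _
        _ = p^t := cardV
    have hbT : b ≤ p^t := by
      calc b ≤ Fintype.card V := Finset.card_le_univ _
        _ = p^t := cardV
    have hTle : p^t ≤ p^(t+4) := Nat.pow_le_pow_right hppos (by omega)
    have h1T : 1 ≤ p^t := Nat.one_le_pow _ _ hppos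
    have hprod : (a+1) * (b+1) ≤ 4 * p^(t+4) := by
      have : (a+1) * (b+1) = a*b + a + b + 1 := by ring
      rw [this]
      have h1 : a ≤ p^(t+4) := haT.trans hTle
      have h2 : b ≤ p^(t+4) := hbT.trans hTle
      have h3 : 1 ≤ p^(t+4) := h1T.trans hTle
      omega
    calc ((runC F A₀ A₀).1.powerset.filter (fun R => R.card ≤ k)).card *
          ((runC F A₀ A₀).2.powerset.filter (fun R => R.card ≤ k)).card
        ≤ ((k+1) * (a+1)^k) * ((k+1) * (b+1)^k) :=
          Nat.mul_le_mul (subsets_card_le _ k) (subsets_card_le _ k)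
      _ = (k+1)^2 * ((a+1)*(b+1))^k := by rw [mul_pow]; ring
      _ ≤ (k+1)^2 * (4 * p^(t+4))^k :=
          Nat.mul_le_mul_left _ (Nat.pow_le_pow_left hprod k)
  have hFcard : ℱ.card ≤ (s+1) * (p^t+1)^s := by
    have : ℱ = ((univ : Finset V).powerset).filter (fun F => F.card ≤ s) := by
      rw [hℱ, Finset.powerset_univ]
    rw [this]
    have := subsets_card_le (univ : Finset V) s
    rwa [Finset.card_univ, cardV] at this
  have hTbound : 𝒯.card ≤ ((s+1) * (p^t+1)^s) * ((k+1)^2 * (4 * p^(t+4))^k) := by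
    refine (Finset.card_biUnion_le).trans ?_
    calc ∑ F ∈ ℱ, ((((runC F A₀ A₀).1.powerset.filter (fun R => R.card ≤ k)) ×ˢ
          ((runC F A₀ A₀).2.powerset.filter (fun R => R.card ≤ k))).image
            (fun pr => (F, pr.1, pr.2))).card
        ≤ ∑ _F ∈ ℱ, (k+1)^2 * (4 * p^(t+4))^k := Finset.sum_le_sum hperF
      _ = ℱ.card * ((k+1)^2 * (4 * p^(t+4))^k) := by rw [Finset.sum_const, smul_eq_mul]
      _ ≤ ((s+1) * (p^t+1)^s) * ((k+1)^2 * (4 * p^(t+4))^k) :=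
          Nat.mul_le_mul_right _ hFcard
  -- numeric bound in ℕ
  set E : ℕ := 12 * p^2 * (t^2 + k) with hE
  have hnum : ((s+1) * (p^t+1)^s) * ((k+1)^2 * (4 * p^(t+4))^k) ≤ p^(t*k) * p^E := by
    have h_a : s + 1 ≤ p^(4*p^2*t^2) := by
      calc s + 1 ≤ 2^s := Nat.lt_two_pow_self (n := s)
        _ ≤ p^s := Nat.pow_le_pow_left hp2 s
        _ ≤ p^(4*p^2*t^2) := Nat.pow_le_pow_right hppos (by
            rw [hs]
            exact Nat.mul_le_mul_left _ (Nat.le_self_pow (by norm_num) t))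
    have hpt2 : p^t + 1 ≤ p^(2*t) := by
      have h1 : 1 ≤ p^t := Nat.one_le_pow _ _ hppos
      have h2 : 2 ≤ p^t := by
        calc 2 ≤ p := hp2
          _ = p^1 := (pow_one p).symm
          _ ≤ p^t := Nat.pow_le_pow_right hppos ht
      calc p^t + 1 ≤ p^t + p^t := by omega
        _ = 2 * p^t := by ring
        _ ≤ p^t * p^t := Nat.mul_le_mul_right _ h2
        _ = p^(2*t) := by rw [← pow_add]; congr 1; ring
    have h_b : (p^t+1)^s ≤ p^(8*p^2*t^2) := by
      calc (p^t+1)^s ≤ (p^(2*t))^s := Nat.pow_le_pow_left hpt2 s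
        _ = p^(2*t*s) := by rw [← pow_mul]
        _ = p^(8*p^2*t^2) := by rw [hs]; congr 1; ring
    have hk2 : k + 1 ≤ p^k := by
      calc k + 1 ≤ 2^k := Nat.lt_two_pow_self (n := k)
        _ ≤ p^k := Nat.pow_le_pow_left hp2 k
    have h_c : (k+1)^2 ≤ p^(2*k) := by
      calc (k+1)^2 ≤ (p^k)^2 := Nat.pow_le_pow_left hk2 2
        _ = p^(2*k) := by rw [← pow_mul]; congr 1; ring
    have h_d : (4 * p^(t+4))^k ≤ p^(2*k) * p^((t+4)*k) := by
      have h4 : (4:ℕ) = 2^2 := by norm_num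
      calc (4 * p^(t+4))^k = 4^k * (p^(t+4))^k := by rw [mul_pow]
        _ = 4^k * p^((t+4)*k) := by rw [← pow_mul]
        _ ≤ p^(2*k) * p^((t+4)*k) := by
            refine Nat.mul_le_mul_right _ ?_
            calc (4:ℕ)^k = 2^(2*k) := by rw [h4, ← pow_mul]
              _ ≤ p^(2*k) := Nat.pow_le_pow_left hp2 _
    calc ((s+1) * (p^t+1)^s) * ((k+1)^2 * (4 * p^(t+4))^k)
        ≤ (p^(4*p^2*t^2) * p^(8*p^2*t^2)) * (p^(2*k) * (p^(2*k) * p^((t+4)*k))) := by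
          refine Nat.mul_le_mul (Nat.mul_le_mul h_a h_b) (Nat.mul_le_mul h_c h_d)
      _ = p^(4*p^2*t^2 + 8*p^2*t^2 + 2*k + 2*k + (t+4)*k) := by
          rw [← pow_add, ← pow_add, ← pow_add, ← pow_add]
          congr 1
          ring
      _ ≤ p^(t*k + E) := by
          refine Nat.pow_le_pow_right hppos ?_
          rw [hE]
          have h8 : 8 * k ≤ 12 * p^2 * k := by
            refine Nat.mul_le_mul_right k ?_
            nlinarith [hppos]
          nlinarith [h8]
      _ = p^(t*k) * p^E := by rw [pow_add]
  -- put everything together, and move to ℝ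
  have hfinal : ((univ : Finset (Finset V × Finset V)).filter Q).card ≤ p^(t*k) * p^E :=
    hinj.trans (hTbound.trans hnum)
  rw [hcard]
  have hcast : (((univ : Finset (Finset V × Finset V)).filter Q).card : ℝ)
      ≤ (p:ℝ)^(t*k) * (p:ℝ)^E := by exact_mod_cast hfinal
  have hE2 : (p:ℝ)^E ≤ (2:ℝ) ^ (((12 * p^3 : ℕ) : ℝ) * ((t : ℝ) ^ 2 + k)) := by
    have h0p : (0:ℝ) ≤ (p:ℝ) := by positivity
    have hp2r : (p:ℝ) ≤ (2:ℝ)^(p:ℝ) := by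
      have h1 : (p:ℕ) < 2^p := Nat.lt_two_pow_self (n := p)
      have h2 : (p:ℝ) ≤ ((2^p : ℕ) : ℝ) := by exact_mod_cast h1.le
      calc (p:ℝ) ≤ ((2^p : ℕ) : ℝ) := h2
        _ = (2:ℝ)^(p:ℕ) := by push_cast; ring
        _ = (2:ℝ)^(p:ℝ) := by rw [← Real.rpow_natCast]
    have hEnn : (0:ℝ) ≤ (E:ℝ) := by positivity
    calc (p:ℝ)^E = (p:ℝ)^(E:ℝ) := by rw [Real.rpow_natCast]
      _ ≤ ((2:ℝ)^(p:ℝ))^(E:ℝ) := by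
          exact Real.rpow_le_rpow h0p hp2r hEnn
      _ = (2:ℝ)^((p:ℝ) * (E:ℝ)) := by rw [← Real.rpow_mul (by norm_num)]
      _ = (2:ℝ) ^ (((12 * p^3 : ℕ) : ℝ) * ((t : ℝ) ^ 2 + k)) := by
          congr 1
          rw [hE]
          push_cast
          ring
  calc (((univ : Finset (Finset V × Finset V)).filter Q).card : ℝ)
      ≤ (p:ℝ)^(t*k) * (p:ℝ)^E := hcast
    _ ≤ (p:ℝ)^(t*k) * (2:ℝ) ^ (((12 * p^3 : ℕ) : ℝ) * ((t : ℝ) ^ 2 + k)) :=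
        mul_le_mul_of_nonneg_left hE2 (by positivity)
    _ = (2:ℝ) ^ (((12 * p^3 : ℕ) : ℝ) * ((t : ℝ) ^ 2 + k)) * (p:ℝ)^(t*k) := by ring
end
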